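/- arXiv:1802.04383 — 4 statements merged into one kernel-verified Lean document; each statement's English description precedes it below -/
import Mathlib

section
/- Let h : ℝ → (-∞, +∞] be a function that admits a directional derivative at every point of its domain in every direction (in the sense of one-sided limits with values in (-∞, +∞]). Then h is lower semicontinuous at every point of its domain. -/
open Filter Set

def HasDirDeriv {Ω : Type*} [AddCommGroup Ω] [Module ℝ Ω]
    (h : Ω → EReal) (x d : Ω) (L : EReal) : Prop :=
  Tendsto (fun t : ℝ => ((t⁻¹ : ℝ) : EReal) * (h (x + t • d) - h x))
    (nhdsWithin 0 (Set.Ioi 0)) (nhds L)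

lemma ray_lemma (h : ℝ → EReal) (x a : ℝ) (hx : h x = (a : EReal)) (d : ℝ)
    (L : EReal) (hL : L ≠ ⊥) (hdd : HasDirDeriv h x d L) (b : ℝ) (hb : b < a) :
    ∀ᶠ t in nhdsWithin (0:ℝ) (Set.Ioi 0), (b : EReal) < h (x + t • d) := by
  obtain ⟨M, -, hM⟩ := EReal.exists_between_coe_real (show (⊥:EReal) < L from hL.bot_lt)
  have h1 : ∀ᶠ t in nhdsWithin (0:ℝ) (Set.Ioi 0),
      (M : EReal) < ((t⁻¹ : ℝ) : EReal) * (h (x + t • d) - h x) :=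
    hdd (Ioi_mem_nhds hM)
  have tendM : Tendsto (fun t : ℝ => t * M) (nhdsWithin (0:ℝ) (Set.Ioi 0)) (nhds 0) := by
    have c : Continuous (fun t : ℝ => t * M) := by fun_prop
    simpa using (c.tendsto 0).mono_left (nhdsWithin_le_nhds (s := Set.Ioi (0:ℝ)))
  have h2 : ∀ᶠ t in nhdsWithin (0:ℝ) (Set.Ioi 0), b - a < t * M :=
    tendM (Ioi_mem_nhds (by linarith))
  filter_upwards [h1, h2, self_mem_nhdsWithin] with t hMt h2t ht
  have ht0 : (0:ℝ) < t := ht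
  have htE : (0:EReal) < (t : EReal) := by exact_mod_cast ht0
  have key : ((t : ℝ) : EReal) * (M : EReal) < h (x + t • d) - h x := by
    rw [← not_le, ← EReal.div_le_iff_le_mul htE (EReal.coe_ne_top t), not_le]
    have : (h (x + t • d) - h x) / (t : EReal) = ((t⁻¹ : ℝ) : EReal) * (h (x + t • d) - h x) := by
      rw [EReal.coe_inv, div_eq_mul_inv, mul_comm]
    rw [this]
    exact hMt
  have key2 : ((t : ℝ) : EReal) * (M : EReal) + (a : EReal) < h (x + t • d) := by
    rw [← EReal.lt_sub_iff_add_lt (Or.inl (EReal.coe_ne_bot a)) (Or.inl (EReal.coe_ne_top a)), ← hx]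
    exact key
  calc (b : EReal) < ((t * M + a : ℝ) : EReal) := by
        exact_mod_cast (by linarith : b < t * M + a)
    _ = ((t : ℝ) : EReal) * (M : EReal) + (a : EReal) := by push_cast; ring
    _ < h (x + t • d) := key2

theorem stmt_2 (h : ℝ → EReal) (hbot : ∀ y, h y ≠ ⊥)
    (hdd : ∀ x, h x ≠ ⊤ → ∀ d : ℝ, ∃ L : EReal, L ≠ ⊥ ∧ HasDirDeriv h x d L) :
    ∀ x, h x ≠ ⊤ → LowerSemicontinuousAt h x := by
  intro x hx
  intro y hy
  rcases eq_or_ne y ⊥ with rfl | hyb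
  · filter_upwards with z
    exact (hbot z).bot_lt
  · obtain ⟨L1, hL1, hdd1⟩ := hdd x hx 1
    obtain ⟨L2, hL2, hdd2⟩ := hdd x hx (-1)
    lift h x to ℝ using ⟨hx, hbot x⟩ with a hxa
    lift y to ℝ using ⟨hy.ne_top, hyb⟩ with b
    have hb : b < a := by exact_mod_cast hy
    have E1 := ray_lemma h x a hxa.symm 1 L1 hL1 hdd1 b hb
    have E2 := ray_lemma h x a hxa.symm (-1) L2 hL2 hdd2 b hb
    rw [← nhdsNE_sup_pure x, eventually_sup]
    constructor
    · rw [← nhdsLT_sup_nhdsGT x, eventually_sup]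
      constructor
      · have T2 : Tendsto (fun z : ℝ => x - z) (nhdsWithin x (Set.Iio x))
            (nhdsWithin (0:ℝ) (Set.Ioi 0)) := by
          apply tendsto_nhdsWithin_of_tendsto_nhds_of_eventually_within
          · have c : Continuous (fun z : ℝ => x - z) := by fun_prop
            simpa using (c.tendsto x).mono_left (nhdsWithin_le_nhds (s := Set.Iio x))
          · filter_upwards [self_mem_nhdsWithin] with z hz
            simp only [Set.mem_Ioi]
            exact sub_pos.mpr hz
        have := T2.eventually E2
        filter_upwards [this] with z hz
        simpa using hz
      · have T1 : Tendsto (fun z : ℝ => z - x) (nhdsWithin x (Set.Ioi x))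
            (nhdsWithin (0:ℝ) (Set.Ioi 0)) := by
          apply tendsto_nhdsWithin_of_tendsto_nhds_of_eventually_within
          · have c : Continuous (fun z : ℝ => z - x) := by fun_prop
            simpa using (c.tendsto x).mono_left (nhdsWithin_le_nhds (s := Set.Ioi x))
          · filter_upwards [self_mem_nhdsWithin] with z hz
            simp only [Set.mem_Ioi]
            exact sub_pos.mpr hz
        have := T1.eventually E1
        filter_upwards [this] with z hz
        simpa using hz
    · rw [eventually_pure, ← hxa]
      exact_mod_cast hb
end

section
/- Let G = (V, E, w) be a finite weighted graph with w : E → ℝ₊, f : ℝ^V → ℝ differentiable, and for each v ∈ V let g_v : ℝ → (-∞, +∞] be directionally differentiable. Define F(x) = f(x) + Σ_v g_v(x_v) + Σ_{(u,v)∈E} w_{(u,v)}|x_u − x_v|. Then for every x ∈ dom F and d ∈ ℝ^V, F admits a directional derivative at x in direction d, equal to Σ_{v: d_v>0} δ⁺_v(x)·d_v + Σ_{v: d_v<0} δ⁻_v(x)·d_v + Σ_{(u,v)∈E, x_u=x_v} w_{(u,v)}|d_u − d_v|, where δ⁺_v(x) = ∇_v f(x) + g_v'(x_v, +1) + Σ_{e=(u,v)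 or (v,u) ∈ E} w_e·sign(x_v − x_u) and δ⁻_v(x) = ∇_v f(x) − g_v'(x_v, −1) + Σ_{e=(u,v) or (v,u) ∈ E} w_e·sign(x_v − x_u). -/
open Filter Set Finset

variable {V : Type*} [Fintype V] [DecidableEq V]

/-- The objective `F = f + Σ_v g_v + graph total variation`. -/
noncomputable def objF (E : Finset (V × V)) (w : V × V → ℝ)
    (f : (V → ℝ) → ℝ) (g : V → ℝ → EReal) (x : V → ℝ) : EReal :=
  ((f x : ℝ) : EReal) + ∑ v, g v (x v) +
    ((∑ e ∈ E, w e * |x e.1 - x e.2| : ℝ) : EReal)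

/-- `δ⁺_v(x) = ∇_v f(x) + g_v'(x_v, +1) + Σ_{e ∋ v} w_e sign(x_v − x_u)`. -/
noncomputable def deltaPlus (E : Finset (V × V)) (w : V × V → ℝ)
    (f : (V → ℝ) → ℝ) (gd : V → ℝ → ℝ → EReal) (x : V → ℝ) (v : V) : EReal :=
  ((fderiv ℝ f x (Pi.single v 1) : ℝ) : EReal) + gd v (x v) 1 +
    ((∑ e ∈ E.filter (fun e => e.1 = v ∨ e.2 = v),
        w e * Real.sign (x v - x (if e.1 = v then e.2 else e.1)) : ℝ) : EReal)

/-- `δ⁻_v(x) = ∇_v f(x) − g_v'(x_v, −1) + Σ_{e ∋ v} w_e sign(x_v − x_u)`. -/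
noncomputable def deltaMinus (E : Finset (V × V)) (w : V × V → ℝ)
    (f : (V → ℝ) → ℝ) (gd : V → ℝ → ℝ → EReal) (x : V → ℝ) (v : V) : EReal :=
  ((fderiv ℝ f x (Pi.single v 1) : ℝ) : EReal) - gd v (x v) (-1) +
    ((∑ e ∈ E.filter (fun e => e.1 = v ∨ e.2 = v),
        w e * Real.sign (x v - x (if e.1 = v then e.2 else e.1)) : ℝ) : EReal)

/-- The value of the directional derivative of `F` at `x` in direction `d`. -/
noncomputable def dirDerivVal (E : Finset (V × V)) (w : V × V → ℝ)
    (f : (V → ℝ) → ℝ) (gd : V → ℝ → ℝ → EReal) (x d : V → ℝ) : EReal :=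
  (∑ v ∈ univ.filter (fun v => 0 < d v),
      ((d v : ℝ) : EReal) * deltaPlus E w f gd x v) +
  (∑ v ∈ univ.filter (fun v => d v < 0),
      ((d v : ℝ) : EReal) * deltaMinus E w f gd x v) +
  ((∑ e ∈ E.filter (fun e => x e.1 = x e.2), w e * |d e.1 - d e.2| : ℝ) : EReal)

/-! ### Auxiliary lemmas on `EReal` -/

lemma ereal_coe_sum {ι : Type*} (s : Finset ι) (r : ι → ℝ) :
    ((∑ i ∈ s, r i : ℝ) : EReal) = ∑ i ∈ s, ((r i : ℝ) : EReal) :=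
  map_sum (⟨⟨Real.toEReal, EReal.coe_zero⟩, EReal.coe_add⟩ : ℝ →+ EReal) r s

lemma ereal_add_ne_bot {a b : EReal} (ha : a ≠ ⊥) (hb : b ≠ ⊥) : a + b ≠ ⊥ := by
  simp [EReal.add_eq_bot_iff, ha, hb]

lemma ereal_sum_ne_bot {ι : Type*} (s : Finset ι) (f : ι → EReal)
    (h : ∀ i ∈ s, f i ≠ ⊥) : ∑ i ∈ s, f i ≠ ⊥ := by
  classical
  induction s using Finset.induction_on with
  | empty => simp
  | @insert a s' hi ih =>
    rw [Finset.sum_insert hi]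
    exact ereal_add_ne_bot (h a (by simp)) (ih fun i hi' => h i (by simp [hi']))

lemma ereal_sum_eq_top {ι : Type*} (s : Finset ι) (f : ι → EReal)
    (h : ∀ i ∈ s, f i ≠ ⊥) {i₀ : ι} (hi₀ : i₀ ∈ s) (htop : f i₀ = ⊤) :
    ∑ i ∈ s, f i = ⊤ := by
  classical
  rw [← Finset.add_sum_erase _ _ hi₀, htop]
  exact EReal.top_add_of_ne_bot (ereal_sum_ne_bot _ _ fun i hi => h i (Finset.mem_of_mem_erase hi))

lemma ereal_pos_mul_ne_bot {c : ℝ} (hc : 0 < c) {X : EReal} (hX : X ≠ ⊥) :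
    (c : EReal) * X ≠ ⊥ := by
  induction X with
  | bot => simp at hX
  | coe r => rw [← EReal.coe_mul]; exact EReal.coe_ne_bot _
  | top => rw [EReal.mul_top_of_pos (by exact_mod_cast hc)]; simp

lemma ereal_sub_coe_ne_bot {X : EReal} (hX : X ≠ ⊥) (c : ℝ) : X - (c : EReal) ≠ ⊥ := by
  induction X with
  | bot => simp at hX
  | coe r => rw [← EReal.coe_sub]; exact EReal.coe_ne_bot _
  | top => rw [EReal.top_sub_coe]; simp

lemma ereal_distrib_pos {c : ℝ} (hc : 0 < c) (a b : ℝ) (X : EReal) (hX : X ≠ ⊥) :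
    (c : EReal) * ((a : EReal) + X + (b : EReal)) =
      ((c * a : ℝ) : EReal) + (c : EReal) * X + ((c * b : ℝ) : EReal) := by
  have hc' : (0 : EReal) < (c : EReal) := by exact_mod_cast hc
  induction X with
  | bot => simp at hX
  | coe r => norm_cast; ring
  | top =>
    rw [EReal.add_top_of_ne_bot (EReal.coe_ne_bot a), EReal.top_add_of_ne_bot (EReal.coe_ne_bot b),
      EReal.mul_top_of_pos hc',
      EReal.add_top_of_ne_bot (EReal.coe_ne_bot _), EReal.top_add_of_ne_bot (EReal.coe_ne_bot _)]

lemma ereal_distrib_neg {c : ℝ} (hc : c < 0) (a b : ℝ) (X : EReal) (hX : X ≠ ⊥) :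
    (c : EReal) * ((a : EReal) - X + (b : EReal)) =
      ((c * a : ℝ) : EReal) + ((-c : ℝ) : EReal) * X + ((c * b : ℝ) : EReal) := by
  induction X with
  | bot => simp at hX
  | coe r =>
    rw [show ((a:EReal) - (r:EReal)) = ((a - r : ℝ) : EReal) by norm_cast]
    norm_cast; ring
  | top =>
    rw [show ((a:EReal) - ⊤) = ⊥ by simp, show ((⊥ : EReal) + (b:EReal)) = ⊥ by simp,
      EReal.mul_bot_of_neg (by exact_mod_cast hc : ((c:EReal)) < 0),
      EReal.mul_top_of_pos (by exact_mod_cast neg_pos.2 hc : (0:EReal) < ((-c:ℝ):EReal)),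
      EReal.add_top_of_ne_bot (EReal.coe_ne_bot _), EReal.top_add_of_ne_bot (EReal.coe_ne_bot _)]

lemma ereal_tendsto_add {α : Type*} {l : Filter α} {f g : α → EReal} {A B : EReal}
    (hA : A ≠ ⊥) (hB : B ≠ ⊥) (hf : Tendsto f l (nhds A)) (hg : Tendsto g l (nhds B)) :
    Tendsto (fun t => f t + g t) l (nhds (A + B)) := by
  have := EReal.continuousAt_add (p := (A, B)) (Or.inr hB) (Or.inl hA)
  exact this.tendsto.comp (hf.prodMk_nhds hg)

lemma ereal_tendsto_sum {ι α : Type*} {l : Filter α} (s : Finset ι) (F : ι → α → EReal)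
    (L : ι → EReal) (hL : ∀ i ∈ s, L i ≠ ⊥)
    (h : ∀ i ∈ s, Tendsto (F i) l (nhds (L i))) :
    Tendsto (fun t => ∑ i ∈ s, F i t) l (nhds (∑ i ∈ s, L i)) := by
  classical
  induction s using Finset.induction_on with
  | empty => simpa using tendsto_const_nhds
  | @insert a s' hi ih =>
    simp only [Finset.sum_insert hi]
    exact ereal_tendsto_add (hL a (by simp))
      (ereal_sum_ne_bot _ _ fun i hi' => hL i (by simp [hi']))
      (h a (by simp))
      (ih (fun i hi' => hL i (by simp [hi'])) (fun i hi' => h i (by simp [hi'])))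

lemma ereal_tendsto_const_mul {α : Type*} {l : Filter α} {f : α → EReal} {A : EReal}
    {c : ℝ} (hc : c ≠ 0) (hf : Tendsto f l (nhds A)) :
    Tendsto (fun t => (c : EReal) * f t) l (nhds ((c : EReal) * A)) := by
  have hc' : (c : EReal) ≠ 0 := by exact_mod_cast hc
  have := EReal.continuousAt_mul (p := ((c : EReal), A)) (Or.inl hc') (Or.inl hc')
    (Or.inl (EReal.coe_ne_bot c)) (Or.inl (EReal.coe_ne_top c))
  exact this.tendsto.comp (tendsto_const_nhds.prodMk_nhds hf)

lemma dirDeriv_scale {g : ℝ → EReal} {y : ℝ} {L : EReal} {c dir : ℝ} (hc : 0 < c)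
    (h : Tendsto (fun t : ℝ => ((t⁻¹ : ℝ) : EReal) * (g (y + t * dir) - g y))
      (nhdsWithin 0 (Set.Ioi 0)) (nhds L)) :
    Tendsto (fun t : ℝ => ((t⁻¹ : ℝ) : EReal) * (g (y + t * (c * dir)) - g y))
      (nhdsWithin 0 (Set.Ioi 0)) (nhds ((c : EReal) * L)) := by
  have hmap : Tendsto (fun t : ℝ => t * c)
      (nhdsWithin 0 (Set.Ioi 0)) (nhdsWithin 0 (Set.Ioi 0)) := by
    apply tendsto_nhdsWithin_of_tendsto_nhds_of_eventually_within
    · simpa using ((continuous_mul_right c).tendsto 0).mono_left nhdsWithin_le_nhds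
    · filter_upwards [self_mem_nhdsWithin] with t ht
      exact mul_pos ht hc
  have h2 := ereal_tendsto_const_mul (ne_of_gt hc) (h.comp hmap)
  refine h2.congr fun t => ?_
  show (c : EReal) * (((((t * c)⁻¹ : ℝ)) : EReal) * (g (y + t * c * dir) - g y)) = _
  rw [← mul_assoc, ← EReal.coe_mul]
  have : c * (t * c)⁻¹ = t⁻¹ := by
    rw [mul_inv_rev, ← mul_assoc, mul_inv_cancel₀ (ne_of_gt hc), one_mul]
  rw [this, mul_assoc t c dir, mul_comm c dir, ← mul_assoc t dir c]

/-! ### Real-analysis lemmas -/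

lemma slope_tendsto_of_hasDerivAt {φ : ℝ → ℝ} {D : ℝ} (h : HasDerivAt φ D 0) :
    Tendsto (fun t : ℝ => t⁻¹ * (φ t - φ 0)) (nhdsWithin 0 (Set.Ioi 0)) (nhds D) := by
  have := hasDerivAt_iff_tendsto_slope.1 h
  have h2 := this.mono_left (nhdsWithin_mono 0 (fun t ht => ne_of_gt ht))
  refine h2.congr fun t => ?_
  simp [slope_def_field, div_eq_inv_mul]

lemma real_part_tendsto (E : Finset (V × V)) (w : V × V → ℝ)
    (f : (V → ℝ) → ℝ) (hf : Differentiable ℝ f) (x d : V → ℝ) :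
    Tendsto (fun t : ℝ => t⁻¹ * ((f (x + t • d) - f x) +
        (∑ e ∈ E, w e * |(x + t • d) e.1 - (x + t • d) e.2| - ∑ e ∈ E, w e * |x e.1 - x e.2|)))
      (nhdsWithin 0 (Set.Ioi 0))
      (nhds (fderiv ℝ f x d + ∑ e ∈ E, (if x e.1 = x e.2 then w e * |d e.1 - d e.2|
        else w e * Real.sign (x e.1 - x e.2) * (d e.1 - d e.2)))) := by
  have key : ∀ t : ℝ, t⁻¹ * ((f (x + t • d) - f x) +
      (∑ e ∈ E, w e * |(x + t • d) e.1 - (x + t • d) e.2| - ∑ e ∈ E, w e * |x e.1 - x e.2|)) =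
      t⁻¹ * (f (x + t • d) - f x) +
      ∑ e ∈ E, t⁻¹ * (w e * |(x + t • d) e.1 - (x + t • d) e.2| - w e * |x e.1 - x e.2|) := by
    intro t
    rw [← Finset.sum_sub_distrib, ← Finset.mul_sum, mul_add]
  simp only [key]
  apply Tendsto.add
  · have hline : HasDerivAt (fun t : ℝ => x + t • d) d 0 := by
      simpa using ((hasDerivAt_id (0 : ℝ)).smul_const d).const_add x
    have hcomp : HasDerivAt (fun t : ℝ => f (x + t • d)) (fderiv ℝ f x d) 0 := by
      have := (hf (x + (0 : ℝ) • d)).hasFDerivAt.comp_hasDerivAt 0 hline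
      simpa [Function.comp_def] using this
    have := slope_tendsto_of_hasDerivAt hcomp
    simpa using this
  · apply tendsto_finset_sum
    intro e _
    by_cases he : x e.1 = x e.2
    · rw [if_pos he]
      apply Tendsto.congr' _ tendsto_const_nhds
      filter_upwards [self_mem_nhdsWithin] with t ht
      have : (x + t • d) e.1 - (x + t • d) e.2 = t * (d e.1 - d e.2) := by
        simp [Pi.add_apply, Pi.smul_apply, he]; ring
      have ht' : (t:ℝ) ≠ 0 := ne_of_gt ht
      rw [this, he, sub_self, abs_zero, mul_zero, sub_zero, abs_mul, abs_of_pos (show (0:ℝ) < t from ht)]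
      field_simp
    · rw [if_neg he]
      have ha : x e.1 - x e.2 ≠ 0 := sub_ne_zero.2 he
      have hu : HasDerivAt (fun t : ℝ => (x e.1 - x e.2) + t * (d e.1 - d e.2))
          (d e.1 - d e.2) 0 := by
        simpa using ((hasDerivAt_id (0:ℝ)).mul_const (d e.1 - d e.2)).const_add (x e.1 - x e.2)
      have habs : HasDerivAt (fun y : ℝ => |y|) ((SignType.sign (x e.1 - x e.2) : ℝ))
          ((x e.1 - x e.2) + 0 * (d e.1 - d e.2)) := by
        simpa using hasDerivAt_abs (by simpa using ha)
      have hc := habs.comp 0 hu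
      have hφ : HasDerivAt (fun t : ℝ => w e * |(x e.1 - x e.2) + t * (d e.1 - d e.2)|)
          (w e * (Real.sign (x e.1 - x e.2) * (d e.1 - d e.2))) 0 := by
        have hsgn : (SignType.sign (x e.1 - x e.2) : ℝ) = Real.sign (x e.1 - x e.2) := by
          rcases lt_or_gt_of_ne ha with h' | h'
          · rw [Real.sign_of_neg h']; simp [h']
          · rw [Real.sign_of_pos h']; simp [h']
        have := hc.const_mul (w e)
        simpa [hsgn, Function.comp] using this
      have := slope_tendsto_of_hasDerivAt hφ
      rw [← mul_assoc] at this
      refine this.congr fun t => ?_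
      have harg : (x + t • d) e.1 - (x + t • d) e.2 = (x e.1 - x e.2) + t * (d e.1 - d e.2) := by
        simp only [Pi.add_apply, Pi.smul_apply, smul_eq_mul]; ring
      rw [harg]
      norm_num

/-! ### Finset algebra lemmas -/

lemma sum_split_sign (d : V → ℝ) (h : V → ℝ) (h0 : ∀ v, d v = 0 → h v = 0) :
    ∑ v ∈ univ.filter (fun v => 0 < d v), h v + ∑ v ∈ univ.filter (fun v => d v < 0), h v
      = ∑ v, h v := by
  rw [← Finset.sum_filter_add_sum_filter_not univ (fun v => 0 < d v) h]
  congr 1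
  apply Finset.sum_subset
  · intro v hv
    simp only [Finset.mem_filter, Finset.mem_univ, true_and] at hv ⊢
    linarith
  · intro v hv hv'
    simp only [Finset.mem_filter, Finset.mem_univ, true_and, not_lt] at hv hv'
    exact h0 v (le_antisymm (by linarith) (by linarith))

lemma fderiv_sum_single (f : (V → ℝ) → ℝ) (x d : V → ℝ) :
    fderiv ℝ f x d = ∑ v, d v * fderiv ℝ f x (Pi.single v 1) := by
  have hd : d = ∑ v, d v • (Pi.single v 1 : V → ℝ) := by
    ext u
    rw [Finset.sum_apply]
    simp [Pi.single_apply, mul_ite]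
  conv_lhs => rw [hd]
  rw [map_sum]
  simp [smul_eq_mul]

lemma swap_sign_sum (E : Finset (V × V)) (w : V × V → ℝ) (x d : V → ℝ) :
    ∑ v, d v * (∑ e ∈ E.filter (fun e => e.1 = v ∨ e.2 = v),
        w e * Real.sign (x v - x (if e.1 = v then e.2 else e.1)))
      = ∑ e ∈ E, w e * Real.sign (x e.1 - x e.2) * (d e.1 - d e.2) := by
  simp only [Finset.mul_sum]
  have step1 : ∀ v, ∑ e ∈ E.filter (fun e => e.1 = v ∨ e.2 = v),
      d v * (w e * Real.sign (x v - x (if e.1 = v then e.2 else e.1)))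
      = ∑ e ∈ E, if e.1 = v ∨ e.2 = v then
          d v * (w e * Real.sign (x v - x (if e.1 = v then e.2 else e.1))) else 0 := by
    intro v; rw [Finset.sum_filter]
  simp only [step1]
  rw [Finset.sum_comm]
  refine Finset.sum_congr rfl fun e he => ?_
  have hmem : (Finset.univ.filter (fun v => e.1 = v ∨ e.2 = v)) = ({e.1, e.2} : Finset V) := by
    ext v; simp [eq_comm, or_comm]
  rw [← Finset.sum_filter, hmem]
  by_cases h12 : e.1 = e.2
  · rw [h12, Finset.pair_eq_singleton, Finset.sum_singleton]
    simp [Real.sign_zero]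
  · rw [Finset.sum_pair h12, if_pos rfl, if_neg h12,
      show x e.2 - x e.1 = -(x e.1 - x e.2) by ring, Real.sign_neg]
    ring

/-! ### The value identity -/

lemma val_eq (E : Finset (V × V)) (w : V × V → ℝ) (f : (V → ℝ) → ℝ)
    (gd : V → ℝ → ℝ → EReal) (x d : V → ℝ)
    (hP : ∀ v, gd v (x v) 1 ≠ ⊥) (hM : ∀ v, gd v (x v) (-1) ≠ ⊥) :
    dirDerivVal E w f gd x d =
      ((fderiv ℝ f x d + ∑ e ∈ E, (if x e.1 = x e.2 then w e * |d e.1 - d e.2|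
          else w e * Real.sign (x e.1 - x e.2) * (d e.1 - d e.2)) : ℝ) : EReal) +
      ∑ v, (if 0 < d v then ((d v : ℝ) : EReal) * gd v (x v) 1
            else if d v < 0 then (((-(d v)) : ℝ) : EReal) * gd v (x v) (-1) else 0) := by
  classical
  set A : V → ℝ := fun v => fderiv ℝ f x (Pi.single v 1) with hA
  set C : V → ℝ := fun v => ∑ e ∈ E.filter (fun e => e.1 = v ∨ e.2 = v),
      w e * Real.sign (x v - x (if e.1 = v then e.2 else e.1)) with hC
  have hplus : ∀ v ∈ univ.filter (fun v => 0 < d v),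
      ((d v : ℝ) : EReal) * deltaPlus E w f gd x v =
        ((d v * A v : ℝ) : EReal) + ((d v : ℝ) : EReal) * gd v (x v) 1
          + ((d v * C v : ℝ) : EReal) := by
    intro v hv
    exact ereal_distrib_pos (Finset.mem_filter.1 hv).2 (A v) (C v) _ (hP v)
  have hminus : ∀ v ∈ univ.filter (fun v => d v < 0),
      ((d v : ℝ) : EReal) * deltaMinus E w f gd x v =
        ((d v * A v : ℝ) : EReal) + (((-(d v)) : ℝ) : EReal) * gd v (x v) (-1)
          + ((d v * C v : ℝ) : EReal) := by
    intro v hv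
    exact ereal_distrib_neg (Finset.mem_filter.1 hv).2 (A v) (C v) _ (hM v)
  rw [dirDerivVal, Finset.sum_congr rfl hplus, Finset.sum_congr rfl hminus]
  simp only [Finset.sum_add_distrib]
  rw [← ereal_coe_sum, ← ereal_coe_sum, ← ereal_coe_sum, ← ereal_coe_sum]
  have hT : (∑ v, (if 0 < d v then ((d v : ℝ) : EReal) * gd v (x v) 1
        else if d v < 0 then (((-(d v)) : ℝ) : EReal) * gd v (x v) (-1) else 0)) =
      (∑ v ∈ univ.filter (fun v => 0 < d v), ((d v : ℝ) : EReal) * gd v (x v) 1) +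
      (∑ v ∈ univ.filter (fun v => d v < 0), (((-(d v)) : ℝ) : EReal) * gd v (x v) (-1)) := by
    rw [← Finset.sum_filter_add_sum_filter_not univ (fun v => 0 < d v)]
    congr 1
    · exact Finset.sum_congr rfl fun v hv => if_pos (Finset.mem_filter.1 hv).2
    · rw [show (∑ v ∈ univ.filter (fun v => ¬ 0 < d v),
          (if 0 < d v then ((d v : ℝ) : EReal) * gd v (x v) 1
            else if d v < 0 then (((-(d v)) : ℝ) : EReal) * gd v (x v) (-1) else 0)) =
          ∑ v ∈ univ.filter (fun v => ¬ 0 < d v),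
            (if d v < 0 then (((-(d v)) : ℝ) : EReal) * gd v (x v) (-1) else 0) from
          Finset.sum_congr rfl fun v hv => by
            rw [if_neg (Finset.mem_filter.1 hv).2]]
      rw [← Finset.sum_filter, Finset.filter_filter]
      congr 1
      ext v
      simp only [Finset.mem_filter, Finset.mem_univ, true_and]
      exact ⟨fun h => h.2, fun h => ⟨by linarith, h⟩⟩
  rw [hT]
  have hAs : (∑ v ∈ univ.filter (fun v => 0 < d v), d v * A v) +
        (∑ v ∈ univ.filter (fun v => d v < 0), d v * A v) = ∑ v, d v * A v :=
    sum_split_sign d _ (fun v hv => by rw [hv, zero_mul])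
  have hCs : (∑ v ∈ univ.filter (fun v => 0 < d v), d v * C v) +
        (∑ v ∈ univ.filter (fun v => d v < 0), d v * C v) = ∑ v, d v * C v :=
    sum_split_sign d _ (fun v hv => by rw [hv, zero_mul])
  have hKr : fderiv ℝ f x d + ∑ e ∈ E, (if x e.1 = x e.2 then w e * |d e.1 - d e.2|
      else w e * Real.sign (x e.1 - x e.2) * (d e.1 - d e.2)) =
      (∑ v ∈ univ.filter (fun v => 0 < d v), d v * A v) +
      (∑ v ∈ univ.filter (fun v => 0 < d v), d v * C v) +
      ((∑ v ∈ univ.filter (fun v => d v < 0), d v * A v) +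
       (∑ v ∈ univ.filter (fun v => d v < 0), d v * C v)) +
      (∑ e ∈ E.filter (fun e => x e.1 = x e.2), w e * |d e.1 - d e.2|) := by
    have hτ : (∑ e ∈ E, (if x e.1 = x e.2 then w e * |d e.1 - d e.2|
        else w e * Real.sign (x e.1 - x e.2) * (d e.1 - d e.2))) =
        (∑ e ∈ E, w e * Real.sign (x e.1 - x e.2) * (d e.1 - d e.2)) +
        (∑ e ∈ E.filter (fun e => x e.1 = x e.2), w e * |d e.1 - d e.2|) := by
      rw [← Finset.sum_filter_add_sum_filter_not E (fun e => x e.1 = x e.2)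
          (fun e => (if x e.1 = x e.2 then w e * |d e.1 - d e.2|
            else w e * Real.sign (x e.1 - x e.2) * (d e.1 - d e.2))),
        ← Finset.sum_filter_add_sum_filter_not E (fun e => x e.1 = x e.2)
          (fun e => w e * Real.sign (x e.1 - x e.2) * (d e.1 - d e.2))]
      have h1 : ∑ e ∈ E.filter (fun e => x e.1 = x e.2),
          (if x e.1 = x e.2 then w e * |d e.1 - d e.2|
            else w e * Real.sign (x e.1 - x e.2) * (d e.1 - d e.2)) =
          ∑ e ∈ E.filter (fun e => x e.1 = x e.2), w e * |d e.1 - d e.2| :=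
        Finset.sum_congr rfl fun e he => if_pos (Finset.mem_filter.1 he).2
      have h2 : ∑ e ∈ E.filter (fun e => ¬ x e.1 = x e.2),
          (if x e.1 = x e.2 then w e * |d e.1 - d e.2|
            else w e * Real.sign (x e.1 - x e.2) * (d e.1 - d e.2)) =
          ∑ e ∈ E.filter (fun e => ¬ x e.1 = x e.2),
            w e * Real.sign (x e.1 - x e.2) * (d e.1 - d e.2) :=
        Finset.sum_congr rfl fun e he => if_neg (Finset.mem_filter.1 he).2
      have h3 : ∑ e ∈ E.filter (fun e => x e.1 = x e.2),
          w e * Real.sign (x e.1 - x e.2) * (d e.1 - d e.2) = 0 := by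
        apply Finset.sum_eq_zero
        intro e he
        rw [(Finset.mem_filter.1 he).2, sub_self, Real.sign_zero]
        ring
      rw [h1, h2, h3]
      ring
    have hswap := swap_sign_sum E w x d
    have hfd := fderiv_sum_single f x d
    rw [hτ, hfd]
    rw [← hAs, ← hCs] at *
    simp only [hA, hC] at *
    linarith [hswap]
  rw [hKr]
  push_cast [EReal.coe_add]
  abel

/-! ### The quotient identity -/

lemma objF_coe (E : Finset (V × V)) (w : V × V → ℝ) (f : (V → ℝ) → ℝ)
    (g : V → ℝ → EReal) (y : V → ℝ) (hbot : ∀ v, g v (y v) ≠ ⊥)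
    (htop : ∀ v, g v (y v) ≠ ⊤) :
    objF E w f g y = ((f y + (∑ v, (g v (y v)).toReal) +
      ∑ e ∈ E, w e * |y e.1 - y e.2| : ℝ) : EReal) := by
  rw [objF]
  have hs : ∑ v, g v (y v) = ((∑ v, (g v (y v)).toReal : ℝ) : EReal) := by
    rw [ereal_coe_sum]
    exact Finset.sum_congr rfl fun v _ => (EReal.coe_toReal (htop v) (hbot v)).symm
  rw [hs, ← EReal.coe_add, ← EReal.coe_add]

lemma quot_eq (E : Finset (V × V)) (w : V × V → ℝ) (f : (V → ℝ) → ℝ)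
    (g : V → ℝ → EReal) (hgbot : ∀ v y, g v y ≠ ⊥) (x d : V → ℝ)
    (hgx : ∀ v, g v (x v) ≠ ⊤) (t : ℝ) (ht : 0 < t) :
    ((t⁻¹ : ℝ) : EReal) * (objF E w f g (x + t • d) - objF E w f g x) =
      ((t⁻¹ * ((f (x + t • d) - f x) +
        (∑ e ∈ E, w e * |(x + t • d) e.1 - (x + t • d) e.2|
          - ∑ e ∈ E, w e * |x e.1 - x e.2|)) : ℝ) : EReal) +
      ∑ v, ((t⁻¹ : ℝ) : EReal) * (g v ((x + t • d) v) - g v (x v)) := by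
  have htinv : (0 : ℝ) < t⁻¹ := inv_pos.2 ht
  have hobjx := objF_coe E w f g x (fun v => hgbot v (x v)) hgx
  by_cases htop : ∀ v, g v ((x + t • d) v) ≠ ⊤
  · have hobj' := objF_coe E w f g (x + t • d) (fun v => hgbot v _) htop
    rw [hobjx, hobj', ← EReal.coe_sub, ← EReal.coe_mul]
    have hterm : ∀ v, ((t⁻¹ : ℝ) : EReal) * (g v ((x + t • d) v) - g v (x v)) =
        ((t⁻¹ * ((g v ((x + t • d) v)).toReal - (g v (x v)).toReal) : ℝ) : EReal) := by
      intro v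
      rw [← EReal.coe_toReal (htop v) (hgbot v _), ← EReal.coe_toReal (hgx v) (hgbot v _)]
      norm_cast
    simp only [hterm]
    rw [← ereal_coe_sum, ← EReal.coe_add, EReal.coe_eq_coe_iff]
    rw [← Finset.mul_sum, Finset.sum_sub_distrib]
    ring
  · push_neg at htop
    obtain ⟨v₀, hv₀⟩ := htop
    have hLHS : objF E w f g (x + t • d) = ⊤ := by
      rw [objF, ereal_sum_eq_top Finset.univ _ (fun v _ => hgbot v _) (Finset.mem_univ v₀) hv₀,
        EReal.add_top_of_ne_bot (EReal.coe_ne_bot _), EReal.top_add_of_ne_bot (EReal.coe_ne_bot _)]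
    rw [hLHS, hobjx, EReal.top_sub_coe, EReal.mul_top_of_pos (by exact_mod_cast htinv)]
    have hRHS : ∑ v, ((t⁻¹ : ℝ) : EReal) * (g v ((x + t • d) v) - g v (x v)) = ⊤ := by
      apply ereal_sum_eq_top Finset.univ _ _ (Finset.mem_univ v₀)
      · rw [hv₀, ← EReal.coe_toReal (hgx v₀) (hgbot v₀ _), EReal.top_sub_coe,
          EReal.mul_top_of_pos (by exact_mod_cast htinv)]
      · intro v _
        apply ereal_pos_mul_ne_bot htinv
        rw [← EReal.coe_toReal (hgx v) (hgbot v _)]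
        exact ereal_sub_coe_ne_bot (hgbot v _) _
    rw [hRHS, EReal.add_top_of_ne_bot (EReal.coe_ne_bot _)]

theorem stmt_8 (E : Finset (V × V)) (w : V × V → ℝ) (hw : ∀ e ∈ E, 0 ≤ w e)
    (f : (V → ℝ) → ℝ) (hf : Differentiable ℝ f)
    (g : V → ℝ → EReal) (hgbot : ∀ v y, g v y ≠ ⊥)
    (gd : V → ℝ → ℝ → EReal)
    (hgd : ∀ v y, g v y ≠ ⊤ → ∀ dir : ℝ,
      HasDirDeriv (g v) y dir (gd v y dir) ∧ gd v y dir ≠ ⊥)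
    (x : V → ℝ) (hx : objF E w f g x ≠ ⊤) (d : V → ℝ) :
    HasDirDeriv (objF E w f g) x d (dirDerivVal E w f gd x d) := by
  classical
  have hgx : ∀ v, g v (x v) ≠ ⊤ := by
    intro v hv
    apply hx
    rw [objF, ereal_sum_eq_top Finset.univ _ (fun u _ => hgbot u _) (Finset.mem_univ v) hv,
      EReal.add_top_of_ne_bot (EReal.coe_ne_bot _), EReal.top_add_of_ne_bot (EReal.coe_ne_bot _)]
  have hPb : ∀ v, gd v (x v) 1 ≠ ⊥ := fun v => (hgd v (x v) (hgx v) 1).2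
  have hMb : ∀ v, gd v (x v) (-1) ≠ ⊥ := fun v => (hgd v (x v) (hgx v) (-1)).2
  rw [HasDirDeriv, val_eq E w f gd x d hPb hMb]
  set T : V → EReal := fun v => if 0 < d v then ((d v : ℝ) : EReal) * gd v (x v) 1
      else if d v < 0 then (((-(d v)) : ℝ) : EReal) * gd v (x v) (-1) else 0 with hTdef
  have hTb : ∀ v, T v ≠ ⊥ := by
    intro v
    rw [hTdef]
    by_cases h1 : 0 < d v
    · simp only [if_pos h1]
      exact ereal_pos_mul_ne_bot h1 (hPb v)
    · simp only [if_neg h1]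
      by_cases h2 : d v < 0
      · simp only [if_pos h2]
        exact ereal_pos_mul_ne_bot (neg_pos.2 h2) (hMb v)
      · simp only [if_neg h2]; simp
  -- limits of each g-quotient
  have hGv : ∀ v, Tendsto (fun t : ℝ => ((t⁻¹ : ℝ) : EReal) * (g v ((x + t • d) v) - g v (x v)))
      (nhdsWithin 0 (Set.Ioi 0)) (nhds (T v)) := by
    intro v
    have harg : ∀ t : ℝ, (x + t • d) v = x v + t * d v := by
      intro t; simp [Pi.add_apply]
    simp only [harg]
    rcases lt_trichotomy (d v) 0 with h2 | h0 | h1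
    · -- negative
      have hbase := (hgd v (x v) (hgx v) (-1)).1
      rw [HasDirDeriv] at hbase
      simp only [smul_eq_mul] at hbase
      have := dirDeriv_scale (neg_pos.2 h2) hbase
      rw [show (-(d v)) * (-1) = d v by ring] at this
      rw [hTdef]
      simp only [if_neg (not_lt.2 (le_of_lt h2)), if_pos h2]
      exact this
    · -- zero
      have hT0 : T v = 0 := by rw [hTdef]; simp [h0]
      rw [hT0]
      apply Tendsto.congr' _ tendsto_const_nhds
      filter_upwards [self_mem_nhdsWithin] with t ht
      rw [h0, mul_zero, add_zero, ← EReal.coe_toReal (hgx v) (hgbot v _), ← EReal.coe_sub,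
        sub_self]
      simp
    · -- positive
      have hbase := (hgd v (x v) (hgx v) 1).1
      rw [HasDirDeriv] at hbase
      simp only [smul_eq_mul] at hbase
      have := dirDeriv_scale h1 hbase
      rw [mul_one] at this
      rw [hTdef]
      simp only [if_pos h1]
      exact this
  have hsum := ereal_tendsto_sum Finset.univ _ T (fun v _ => hTb v) (fun v _ => hGv v)
  have hreal : Tendsto (fun t : ℝ => ((t⁻¹ * ((f (x + t • d) - f x) +
      (∑ e ∈ E, w e * |(x + t • d) e.1 - (x + t • d) e.2|
        - ∑ e ∈ E, w e * |x e.1 - x e.2|)) : ℝ) : EReal))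
      (nhdsWithin 0 (Set.Ioi 0))
      (nhds ((fderiv ℝ f x d + ∑ e ∈ E, (if x e.1 = x e.2 then w e * |d e.1 - d e.2|
        else w e * Real.sign (x e.1 - x e.2) * (d e.1 - d e.2)) : ℝ) : EReal)) :=
    EReal.tendsto_coe.2 (real_part_tendsto E w f hf x d)
  have hcomb := ereal_tendsto_add (EReal.coe_ne_bot _)
    (ereal_sum_ne_bot _ _ fun v _ => hTb v) hreal hsum
  apply hcomb.congr'
  filter_upwards [self_mem_nhdsWithin] with t ht
  exact (quot_eq E w f g hgbot x d hgx t ht).symm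
end

section
/- (Ternary descent certificate) Let F(x) = f(x) + Σ_v g_v(x_v) + Σ_{(u,v)∈E} w_{(u,v)}|x_u − x_v| on a finite weighted graph G = (V,E,w) with w ≥ 0, f differentiable, each g_v directionally differentiable, and let x ∈ dom F. If F admits a strict descent direction at x (some d ∈ ℝ^V with F'(x,d) < 0), then F admits a strict descent direction in {−1, 0, +1}^V. -/
open Filter Set Finset

variable {V : Type*} [Fintype V] [DecidableEq V]

namespace DescentAux

/- ### toolbox (already compiled) -/
lemma mul_ne_bot' {c : ℝ} (hc : 0 < c) {a : EReal} (ha : a ≠ ⊥) : (c : EReal) * a ≠ ⊥ := by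
  induction a using EReal.rec with
  | bot => exact absurd rfl ha
  | coe r => rw [← EReal.coe_mul]; exact EReal.coe_ne_bot _
  | top => rw [EReal.coe_mul_top_of_pos hc]; exact top_ne_bot

lemma add_ne_bot' {a b : EReal} (ha : a ≠ ⊥) (hb : b ≠ ⊥) : a + b ≠ ⊥ := by
  simp [EReal.add_eq_bot_iff, ha, hb]

lemma sum_ne_bot' {ι : Type*} {s : Finset ι} {F : ι → EReal} (h : ∀ i ∈ s, F i ≠ ⊥) :
    ∑ i ∈ s, F i ≠ ⊥ := by
  classical
  induction s using Finset.induction with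
  | empty => simp
  | insert a s hns ih =>
    rw [Finset.sum_insert hns]
    exact add_ne_bot' (h a (Finset.mem_insert_self a s))
      (ih fun i hi => h i (Finset.mem_insert_of_mem hi))

lemma mul_add' {c : ℝ} (hc : 0 < c) {a b : EReal} (ha : a ≠ ⊥) (hb : b ≠ ⊥) :
    (c : EReal) * (a + b) = (c : EReal) * a + (c : EReal) * b := by
  induction a using EReal.rec with
  | bot => exact absurd rfl ha
  | coe r =>
    induction b using EReal.rec with
    | bot => exact absurd rfl hb
    | coe s => norm_cast; ring
    | top =>
      rw [EReal.coe_add_top, EReal.mul_top_of_pos (by exact_mod_cast hc), ← EReal.coe_mul,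
        EReal.coe_add_top]
  | top =>
    induction b using EReal.rec with
    | bot => exact absurd rfl hb
    | coe s =>
      rw [EReal.top_add_coe, EReal.mul_top_of_pos (by exact_mod_cast hc), ← EReal.coe_mul,
        EReal.top_add_coe]
    | top =>
      rw [EReal.top_add_top, EReal.mul_top_of_pos (by exact_mod_cast hc), EReal.top_add_top]

lemma mul_sum' {c : ℝ} (hc : 0 < c) {ι : Type*} {s : Finset ι} {F : ι → EReal}
    (h : ∀ i ∈ s, F i ≠ ⊥) :
    (c : EReal) * ∑ i ∈ s, F i = ∑ i ∈ s, (c : EReal) * F i := by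
  classical
  induction s using Finset.induction with
  | empty => simp
  | insert a s hns ih =>
    rw [Finset.sum_insert hns, Finset.sum_insert hns,
      mul_add' hc (h a (Finset.mem_insert_self a s))
        (sum_ne_bot' fun i hi => h i (Finset.mem_insert_of_mem hi)),
      ih fun i hi => h i (Finset.mem_insert_of_mem hi)]

lemma sum_ne_top_of_ne_top {ι : Type*} {s : Finset ι} {F : ι → EReal}
    (hb : ∀ i ∈ s, F i ≠ ⊥) (ht : ∑ i ∈ s, F i ≠ ⊤) : ∀ i ∈ s, F i ≠ ⊤ := by
  classical
  intro i hi hitop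
  apply ht
  rw [← Finset.add_sum_erase _ _ hi, hitop]
  exact EReal.top_add_of_ne_bot (sum_ne_bot' fun j hj => hb j (Finset.mem_of_mem_erase hj))

lemma tendsto_add' {α : Type*} {l : Filter α} {f g : α → EReal} {a b : EReal}
    (ha : a ≠ ⊥) (hb : b ≠ ⊥) (hf : Tendsto f l (nhds a)) (hg : Tendsto g l (nhds b)) :
    Tendsto (fun t => f t + g t) l (nhds (a + b)) :=
  (EReal.continuousAt_add (p := (a, b)) (Or.inr hb) (Or.inl ha)).tendsto.comp
    (hf.prodMk_nhds hg)

lemma tendsto_sum' {α ι : Type*} {l : Filter α} {s : Finset ι} {F : ι → α → EReal}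
    {L : ι → EReal} (hL : ∀ i ∈ s, L i ≠ ⊥)
    (h : ∀ i ∈ s, Tendsto (F i) l (nhds (L i))) :
    Tendsto (fun t => ∑ i ∈ s, F i t) l (nhds (∑ i ∈ s, L i)) := by
  classical
  induction s using Finset.induction with
  | empty => simpa using tendsto_const_nhds
  | insert a s hns ih =>
    simp only [Finset.sum_insert hns]
    exact tendsto_add' (hL a (Finset.mem_insert_self a s))
      (sum_ne_bot' fun i hi => hL i (Finset.mem_insert_of_mem hi))
      (h a (Finset.mem_insert_self a s))
      (ih (fun i hi => hL i (Finset.mem_insert_of_mem hi))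
        (fun i hi => h i (Finset.mem_insert_of_mem hi)))

lemma tendsto_const_mul' {α : Type*} {l : Filter α} {f : α → EReal} {L : EReal} {c : ℝ}
    (hc : 0 < c) (hf : Tendsto f l (nhds L)) :
    Tendsto (fun t => (c : EReal) * f t) l (nhds ((c : EReal) * L)) := by
  have hc0 : (c : EReal) ≠ 0 := by exact_mod_cast hc.ne'
  exact (EReal.continuousAt_mul (p := ((c : EReal), L)) (Or.inl hc0) (Or.inl hc0)
    (Or.inl (EReal.coe_ne_bot c)) (Or.inl (EReal.coe_ne_top c))).tendsto.comp
    (tendsto_const_nhds.prodMk_nhds hf)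

lemma hasDirDeriv_smul {Ω : Type*} [AddCommGroup Ω] [Module ℝ Ω] {h : Ω → EReal} {x d : Ω}
    {L : EReal} {c : ℝ} (hc : 0 < c) (hd : HasDirDeriv h x d L) :
    HasDirDeriv h x (c • d) ((c : EReal) * L) := by
  unfold HasDirDeriv at *
  have hmap : Tendsto (fun t : ℝ => c * t) (nhdsWithin 0 (Set.Ioi 0))
      (nhdsWithin 0 (Set.Ioi 0)) := by
    have hcw : ContinuousWithinAt (fun t : ℝ => c * t) (Set.Ioi 0) 0 :=
      (continuous_const.mul continuous_id).continuousWithinAt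
    have := hcw.tendsto_nhdsWithin (t := Set.Ioi 0) (fun t ht => mul_pos hc ht)
    simpa using this
  have h1 := (tendsto_const_mul' hc hd).comp hmap
  refine h1.congr' ?_
  filter_upwards [self_mem_nhdsWithin] with t ht
  have ht' : (0:ℝ) < t := ht
  have hct : c * t ≠ 0 := (mul_pos hc ht').ne'
  simp only [Function.comp]
  rw [← mul_assoc, ← EReal.coe_mul]
  congr 2
  · field_simp
  · rw [smul_smul, mul_comm]

lemma edge_slope (we a s : ℝ) :
    Tendsto (fun t : ℝ => (we * |a + t * s| - we * |a|) / t) (nhdsWithin 0 (Set.Ioi 0))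
      (nhds (if a = 0 then we * |s| else we * Real.sign a * s)) := by
  rcases eq_or_ne a 0 with ha | ha
  · rw [if_pos ha]
    refine tendsto_const_nhds.congr' ?_
    filter_upwards [self_mem_nhdsWithin] with t ht
    have ht' : (0:ℝ) < t := ht
    rw [ha, zero_add, abs_zero, mul_zero, sub_zero, abs_mul, abs_of_pos ht']
    field_simp
  · rw [if_neg ha]
    refine tendsto_const_nhds.congr' ?_
    have hδ : (0:ℝ) < |a| / (|s| + 1) := by positivity
    have hmem : Set.Ioo (0:ℝ) (|a| / (|s| + 1)) ∈ nhdsWithin (0:ℝ) (Set.Ioi 0) :=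
      Ioo_mem_nhdsGT_of_mem ⟨le_refl _, hδ⟩
    filter_upwards [hmem] with t ht
    have ht0 : (0:ℝ) < t := ht.1
    have hts : |t * s| < |a| := by
      rw [abs_mul, abs_of_pos ht0]
      calc t * |s| ≤ t * (|s| + 1) := by nlinarith [abs_nonneg s]
        _ < (|a| / (|s| + 1)) * (|s| + 1) := by
            apply mul_lt_mul_of_pos_right ht.2; positivity
        _ = |a| := by field_simp
    rcases lt_or_gt_of_ne ha with haneg | hapos
    · have h1 : a + t * s < 0 := by
        rw [abs_of_neg haneg] at hts
        have h2 : t * s < -a := (le_abs_self (t*s)).trans_lt hts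
        linarith
      rw [abs_of_neg h1, abs_of_neg haneg, Real.sign_of_neg haneg]
      field_simp
      ring
    · have h1 : 0 < a + t * s := by
        rw [abs_of_pos hapos] at hts
        have h2 : -(t*s) < a := by
          have := (le_abs_self (-(t*s))).trans_lt (by rwa [abs_neg])
          linarith
        linarith
      rw [abs_of_pos h1, abs_of_pos hapos, Real.sign_of_pos hapos]
      field_simp
      ring

lemma f_slope {n : Type*} [Fintype n] {f : (n → ℝ) → ℝ} (hf : Differentiable ℝ f)
    (x d : n → ℝ) :
    Tendsto (fun t : ℝ => (f (x + t • d) - f (x + (0:ℝ) • d)) / t) (nhdsWithin 0 (Set.Ioi 0))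
      (nhds (fderiv ℝ f x d)) := by
  have h1 : HasDerivAt (fun t : ℝ => x + t • d) d 0 := by
    simpa using ((hasDerivAt_id (0:ℝ)).smul_const d).const_add x
  have hφ : HasDerivAt (fun t : ℝ => f (x + t • d)) (fderiv ℝ f x d) 0 := by
    have h2 := (hf (x + (0:ℝ) • d)).hasFDerivAt.comp_hasDerivAt 0 h1
    simp only [zero_smul, add_zero] at h2; exact h2
  have h3 := hasDerivAt_iff_tendsto_slope.mp hφ
  have h4 := h3.mono_left (nhdsWithin_mono 0 (fun t (ht : t ∈ Set.Ioi 0) => ne_of_gt ht))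
  refine h4.congr' ?_
  filter_upwards [self_mem_nhdsWithin] with t ht
  rw [slope_def_field]
  simp

lemma coe_sum' {ι : Type*} (s : Finset ι) (h : ι → ℝ) :
    ((∑ i ∈ s, h i : ℝ) : EReal) = ∑ i ∈ s, ((h i : ℝ) : EReal) :=
  map_sum (⟨⟨(fun r : ℝ => (r : EReal)), EReal.coe_zero⟩, EReal.coe_add⟩ : ℝ →+ EReal) h s

lemma ereal_helper (S : EReal) (a1 a2 a3 b1 b2 : ℝ) (h : a1 + a2 + a3 = b1 + b2) :
    ((a1 : EReal) + S + (a2 : EReal)) + (a3 : EReal) = (b1 : EReal) + (S + (b2 : EReal)) := by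
  calc ((a1 : EReal) + S + (a2 : EReal)) + (a3 : EReal)
      = S + ((a1 + a2 + a3 : ℝ) : EReal) := by
        rw [EReal.coe_add, EReal.coe_add]; abel
    _ = S + ((b1 + b2 : ℝ) : EReal) := by rw [h]
    _ = (b1 : EReal) + (S + (b2 : EReal)) := by rw [EReal.coe_add]; abel

end DescentAux

namespace Descent

open DescentAux

noncomputable def Tval (E : Finset (V × V)) (w : V × V → ℝ) (x d : V → ℝ) : ℝ :=
  ∑ e ∈ E, (if x e.1 = x e.2 then w e * |d e.1 - d e.2|
    else w e * Real.sign (x e.1 - x e.2) * (d e.1 - d e.2))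

noncomputable def dirG (gd : V → ℝ → ℝ → EReal) (x d : V → ℝ) (v : V) : EReal :=
  if 0 < d v then ((d v : ℝ) : EReal) * gd v (x v) 1
  else if d v < 0 then ((-(d v) : ℝ) : EReal) * gd v (x v) (-1) else 0

noncomputable def Dval (E : Finset (V × V)) (w : V × V → ℝ) (f : (V → ℝ) → ℝ)
    (gd : V → ℝ → ℝ → EReal) (x d : V → ℝ) : EReal :=
  ((fderiv ℝ f x d + Tval E w x d : ℝ) : EReal) + ∑ v, dirG gd x d v

lemma g_fin (E : Finset (V × V)) (w : V × V → ℝ) (f : (V → ℝ) → ℝ)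
    (g : V → ℝ → EReal) (hgbot : ∀ v y, g v y ≠ ⊥) (x : V → ℝ)
    (hx : objF E w f g x ≠ ⊤) : ∀ v, g v (x v) ≠ ⊤ := by
  have hsum : ∑ v, g v (x v) ≠ ⊤ := by
    intro htop
    apply hx
    unfold objF
    rw [htop, EReal.add_top_of_ne_bot (EReal.coe_ne_bot _), EReal.top_add_coe]
  exact fun v => sum_ne_top_of_ne_top (fun v _ => hgbot v (x v)) hsum v (Finset.mem_univ v)

lemma hasDirDeriv_Dval (E : Finset (V × V)) (w : V × V → ℝ)
    (f : (V → ℝ) → ℝ) (hf : Differentiable ℝ f)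
    (g : V → ℝ → EReal) (hgbot : ∀ v y, g v y ≠ ⊥)
    (gd : V → ℝ → ℝ → EReal)
    (hgd : ∀ v y, g v y ≠ ⊤ → ∀ dir : ℝ,
      HasDirDeriv (g v) y dir (gd v y dir) ∧ gd v y dir ≠ ⊥)
    (x : V → ℝ) (hx : objF E w f g x ≠ ⊤) (d : V → ℝ) :
    HasDirDeriv (objF E w f g) x d (Dval E w f gd x d) := by
  classical
  have hgfin : ∀ v, g v (x v) ≠ ⊤ := g_fin E w f g hgbot x hx
  set c : V → ℝ := fun v => (g v (x v)).toReal with hcdef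
  have hgc : ∀ v, g v (x v) = ((c v : ℝ) : EReal) :=
    fun v => (EReal.coe_toReal (hgfin v) (hgbot v (x v))).symm
  set r : ℝ → ℝ := fun t => f (x + t • d) +
    ∑ e ∈ E, w e * |(x + t • d) e.1 - (x + t • d) e.2| with hrdef
  -- real part limit
  have hA : Tendsto (fun t => (r t - r 0) / t) (nhdsWithin 0 (Set.Ioi 0))
      (nhds (fderiv ℝ f x d + Tval E w x d)) := by
    have hkey : ∀ t : ℝ, (r t - r 0) / t =
        (f (x + t • d) - f (x + (0:ℝ) • d)) / t +
        ∑ e ∈ E, (w e * |(x e.1 - x e.2) + t * (d e.1 - d e.2)| - w e * |x e.1 - x e.2|) / t := by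
      intro t
      have h01 : r t = f (x + t • d) +
          ∑ e ∈ E, w e * |(x e.1 - x e.2) + t * (d e.1 - d e.2)| := by
        simp only [hrdef]
        congr 1
        refine Finset.sum_congr rfl fun e _ => ?_
        congr 1
        simp [Pi.add_apply, Pi.smul_apply, smul_eq_mul]
        ring
      have h02 : r 0 = f (x + (0:ℝ) • d) + ∑ e ∈ E, w e * |x e.1 - x e.2| := by
        simp only [hrdef]; simp
      have hs : ∑ e ∈ E, (w e * |x e.1 - x e.2 + t * (d e.1 - d e.2)| - w e * |x e.1 - x e.2|) / t
          = (∑ e ∈ E, (w e * |x e.1 - x e.2 + t * (d e.1 - d e.2)| - w e * |x e.1 - x e.2|)) / t := by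
        rw [Finset.sum_div]
      rw [h01, h02, hs, ← add_div]
      congr 1
      rw [Finset.sum_sub_distrib]
      ring
    have h1 := Filter.Tendsto.add (f_slope hf x d)
      (tendsto_finset_sum E (fun e (_ : e ∈ E) =>
        edge_slope (w e) (x e.1 - x e.2) (d e.1 - d e.2)))
    have h2 : (fderiv ℝ f x d + ∑ e ∈ E, (if x e.1 - x e.2 = 0 then w e * |d e.1 - d e.2|
        else w e * Real.sign (x e.1 - x e.2) * (d e.1 - d e.2)))
        = fderiv ℝ f x d + Tval E w x d := by
      unfold Tval
      congr 1
      exact Finset.sum_congr rfl fun e _ => if_congr sub_eq_zero rfl rfl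
    rw [h2] at h1
    exact h1.congr fun t => (hkey t).symm
  have hAE : Tendsto (fun t : ℝ => ((t⁻¹ : ℝ) : EReal) * ((r t - r 0 : ℝ) : EReal))
      (nhdsWithin 0 (Set.Ioi 0)) (nhds ((fderiv ℝ f x d + Tval E w x d : ℝ) : EReal)) := by
    have := EReal.tendsto_coe.2 hA
    refine this.congr fun t => ?_
    rw [div_eq_inv_mul, EReal.coe_mul]
  -- g part limits
  have hγ : ∀ v, Tendsto (fun t : ℝ => ((t⁻¹ : ℝ) : EReal) *
      (g v (x v + t * d v) - ((c v : ℝ) : EReal)))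
      (nhdsWithin 0 (Set.Ioi 0)) (nhds (dirG gd x d v)) := by
    intro v
    rcases lt_trichotomy (d v) 0 with hv | hv | hv
    · have h1 := (hgd v (x v) (hgfin v) (-1)).1
      have h2 := hasDirDeriv_smul (c := -(d v)) (by linarith) h1
      have h3 : (-(d v)) • (-1 : ℝ) = d v := by rw [smul_eq_mul]; ring
      rw [h3] at h2
      unfold HasDirDeriv at h2
      unfold dirG
      rw [if_neg (not_lt.mpr hv.le), if_pos hv]
      refine h2.congr fun t => ?_
      rw [smul_eq_mul, hgc v]
    · unfold dirG
      rw [if_neg (by rw [hv]; exact lt_irrefl 0), if_neg (by rw [hv]; exact lt_irrefl 0)]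
      have : ∀ t : ℝ, ((t⁻¹ : ℝ) : EReal) * (g v (x v + t * d v) - ((c v : ℝ) : EReal)) = 0 := by
        intro t
        rw [hv, mul_zero, add_zero, hgc v, ← EReal.coe_sub, sub_self]
        norm_cast
        exact mul_zero _
      rw [show (fun t : ℝ => ((t⁻¹ : ℝ) : EReal) * (g v (x v + t * d v) - ((c v : ℝ) : EReal)))
        = fun _ => (0 : EReal) from funext this]
      exact tendsto_const_nhds
    · have h1 := (hgd v (x v) (hgfin v) 1).1
      have h2 := hasDirDeriv_smul (c := d v) hv h1
      have h3 : (d v) • (1 : ℝ) = d v := by rw [smul_eq_mul, mul_one]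
      rw [h3] at h2
      unfold HasDirDeriv at h2
      unfold dirG
      rw [if_pos hv]
      refine h2.congr fun t => ?_
      rw [smul_eq_mul, hgc v]
  have hγbot : ∀ v, dirG gd x d v ≠ ⊥ := by
    intro v
    unfold dirG
    split_ifs with h1 h2
    · exact mul_ne_bot' h1 (hgd v (x v) (hgfin v) 1).2
    · exact mul_ne_bot' (by linarith) (hgd v (x v) (hgfin v) (-1)).2
    · exact EReal.zero_ne_bot
  -- combine
  have hRHS := tendsto_add' (EReal.coe_ne_bot _) (sum_ne_bot' fun v _ => hγbot v) hAE
    (tendsto_sum' (s := Finset.univ) (fun v _ => hγbot v) (fun v _ => hγ v))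
  unfold HasDirDeriv Dval
  refine hRHS.congr' ?_
  filter_upwards [self_mem_nhdsWithin] with t ht
  have ht0 : (0:ℝ) < t := ht
  have hsubbot : ∀ v, g v (x v + t * d v) - ((c v : ℝ) : EReal) ≠ ⊥ := by
    intro v
    rw [sub_eq_add_neg, ← EReal.coe_neg]
    exact add_ne_bot' (hgbot v _) (EReal.coe_ne_bot _)
  have inner_eq : objF E w f g (x + t • d) - objF E w f g x
      = ((r t - r 0 : ℝ) : EReal) + ∑ v, (g v (x v + t * d v) - ((c v : ℝ) : EReal)) := by
    have hsum1 : ∑ v, g v ((x + t • d) v) = ∑ v, g v (x v + t * d v) :=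
      Finset.sum_congr rfl fun v _ => by simp
    have hsum2 : ∑ v, (g v (x v + t * d v) - ((c v : ℝ) : EReal))
        = (∑ v, g v (x v + t * d v)) + ((-(∑ v, c v) : ℝ) : EReal) := by
      calc ∑ v, (g v (x v + t * d v) - ((c v : ℝ) : EReal))
          = ∑ v, (g v (x v + t * d v) + ((-(c v) : ℝ) : EReal)) :=
            Finset.sum_congr rfl fun v _ => by rw [sub_eq_add_neg, EReal.coe_neg]
        _ = (∑ v, g v (x v + t * d v)) + ∑ v, ((-(c v) : ℝ) : EReal) :=
            Finset.sum_add_distrib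
        _ = (∑ v, g v (x v + t * d v)) + ((∑ v, -(c v) : ℝ) : EReal) := by rw [coe_sum']
        _ = (∑ v, g v (x v + t * d v)) + ((-(∑ v, c v) : ℝ) : EReal) := by
            rw [Finset.sum_neg_distrib]
    have hgx : (∑ v, g v (x v)) = ((∑ v, c v : ℝ) : EReal) := by
      rw [Finset.sum_congr rfl fun v _ => hgc v]
      exact (coe_sum' _ _).symm
    have hr0 : r 0 = f x + ∑ e ∈ E, w e * |x e.1 - x e.2| := by
      simp only [hrdef]; simp
    have hrt : r t = f (x + t • d) + ∑ e ∈ E, w e * |(x + t • d) e.1 - (x + t • d) e.2| := by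
      simp only [hrdef]
    show objF E w f g (x + t • d) - objF E w f g x = _
    unfold objF
    rw [hsum1, hsum2, hgx, ← EReal.coe_add (f x), ← EReal.coe_add (f x + ∑ v, c v),
      sub_eq_add_neg, ← EReal.coe_neg]
    exact ereal_helper _ _ _ _ _ _ (by rw [hrt, hr0]; ring)
  rw [inner_eq, mul_add' (inv_pos.2 ht0) (EReal.coe_ne_bot _)
    (sum_ne_bot' fun v _ => hsubbot v), mul_sum' (inv_pos.2 ht0) (fun v _ => hsubbot v)]


noncomputable def Phi (l : (V → ℝ) → ℝ) (C : Finset (V × V)) (cw : V × V → ℝ)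
    (p : V → EReal) (d : V → ℝ) : EReal :=
  ((l d + ∑ e ∈ C, cw e * |d e.1 - d e.2| : ℝ) : EReal) +
    ∑ v ∈ Finset.univ.filter (fun v => 0 < d v), ((d v : ℝ) : EReal) * p v

lemma Phi_ne_bot (l : (V → ℝ) → ℝ) (C : Finset (V × V)) (cw : V × V → ℝ)
    (p : V → EReal) (hp : ∀ v, p v ≠ ⊥) (d : V → ℝ) : Phi l C cw p d ≠ ⊥ :=
  add_ne_bot' (EReal.coe_ne_bot _) (sum_ne_bot' fun v hv =>
    mul_ne_bot' (Finset.mem_filter.mp hv).2 (hp v))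

lemma key (l : (V → ℝ) → ℝ) (hl : IsLinearMap ℝ l) (C : Finset (V × V)) (cw : V × V → ℝ)
    (p : V → EReal) (hp : ∀ v, p v ≠ ⊥) :
    ∀ n : ℕ, ∀ d : V → ℝ, ((Finset.univ.image d).filter (fun t => 0 < t)).card ≤ n →
      (∀ v, 0 ≤ d v) → Phi l C cw p d < 0 →
      ∃ S : Finset V, Phi l C cw p (fun v => if v ∈ S then 1 else 0) < 0 := by
  classical
  intro n
  induction n with
  | zero =>
    intro d hcard hd0 hneg
    exfalso
    have hall : ∀ v, d v = 0 := by
      intro v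
      by_contra hv
      have hpos : 0 < d v := lt_of_le_of_ne (hd0 v) (Ne.symm hv)
      have hmem : d v ∈ (Finset.univ.image d).filter (fun t => 0 < t) :=
        Finset.mem_filter.mpr ⟨Finset.mem_image_of_mem d (Finset.mem_univ v), hpos⟩
      have := Finset.card_pos.mpr ⟨_, hmem⟩
      omega
    have hzero : Phi l C cw p d = 0 := by
      unfold Phi
      have h1 : l d = 0 := by
        rw [show d = 0 from funext hall]
        exact hl.map_zero
      have h2 : ∀ e ∈ C, cw e * |d e.1 - d e.2| = 0 := by
        intro e _; rw [hall e.1, hall e.2]; simp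
      have h3 : Finset.univ.filter (fun v => 0 < d v) = (∅ : Finset V) := by
        apply Finset.filter_eq_empty_iff.mpr
        intro v _
        rw [hall v]; exact lt_irrefl 0
      rw [h1, Finset.sum_congr rfl h2, h3]
      simp
    rw [hzero] at hneg
    exact absurd hneg (lt_irrefl 0)
  | succ n ih =>
    intro d hcard hd0 hneg
    by_cases hP : ((Finset.univ.image d).filter (fun t => 0 < t)).Nonempty
    case neg =>
      refine ih d ?_ hd0 hneg
      rw [Finset.not_nonempty_iff_eq_empty.mp hP]
      simp
    case pos =>
      set P := (Finset.univ.image d).filter (fun t => 0 < t) with hPdef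
      set m := P.min' hP with hmdef
      have hm : 0 < m := (Finset.mem_filter.mp (P.min'_mem hP)).2
      have hm_le : ∀ v, 0 < d v → m ≤ d v := fun v hv =>
        P.min'_le _ (Finset.mem_filter.mpr ⟨Finset.mem_image_of_mem d (Finset.mem_univ v), hv⟩)
      set S := Finset.univ.filter (fun v => 0 < d v) with hSdef
      set u : V → ℝ := fun v => if v ∈ S then 1 else 0 with hudef
      set d' : V → ℝ := fun v => d v - m * u v with hd'def
      have hmemS : ∀ v, v ∈ S ↔ 0 < d v := fun v => by rw [hSdef]; simp
      have hduS : ∀ v, v ∈ S → d v = m + d' v ∧ 0 ≤ d' v := by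
        intro v hv
        have h1 : u v = 1 := if_pos hv
        have h2 := hm_le v ((hmemS v).mp hv)
        constructor
        · simp only [hd'def, h1]; ring
        · simp only [hd'def, h1]; linarith
      have hduN : ∀ v, v ∉ S → d v = 0 ∧ d' v = 0 ∧ u v = 0 := by
        intro v hv
        have h1 : u v = 0 := if_neg hv
        have h2 : d v = 0 :=
          le_antisymm (not_lt.mp fun h => hv ((hmemS v).mpr h)) (hd0 v)
        exact ⟨h2, by simp only [hd'def, h1, h2]; ring, h1⟩
      have hd'0 : ∀ v, 0 ≤ d' v := by
        intro v
        by_cases hv : v ∈ S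
        · exact (hduS v hv).2
        · rw [(hduN v hv).2.1]
      have hcard' : ((Finset.univ.image d').filter (fun t => 0 < t)).card ≤ n := by
        have hsub : (Finset.univ.image d').filter (fun t => 0 < t)
            ⊆ (P.erase m).image (fun t => t - m) := by
          intro t ht
          obtain ⟨h1, h2⟩ := Finset.mem_filter.mp ht
          obtain ⟨v, _, hv⟩ := Finset.mem_image.mp h1
          have hvS : v ∈ S := by
            by_contra hvn
            rw [(hduN v hvn).2.1] at hv
            rw [← hv] at h2
            exact absurd h2 (lt_irrefl 0)
          obtain ⟨hdv, _⟩ := hduS v hvS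
          refine Finset.mem_image.mpr ⟨d v, Finset.mem_erase.mpr ⟨?_, ?_⟩, by rw [hdv, ← hv]; ring⟩
          · intro hdm
            rw [hdm] at hdv
            have : d' v = 0 := by linarith
            rw [this] at hv
            rw [← hv] at h2
            exact absurd h2 (lt_irrefl 0)
          · exact Finset.mem_filter.mpr
              ⟨Finset.mem_image_of_mem d (Finset.mem_univ v), (hmemS v).mp hvS⟩
        have hc1 : P.card ≥ 1 := Finset.card_pos.mpr hP
        calc ((Finset.univ.image d').filter (fun t => 0 < t)).card
            ≤ ((P.erase m).image (fun t => t - m)).card := Finset.card_le_card hsub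
          _ ≤ (P.erase m).card := Finset.card_image_le
          _ = P.card - 1 := Finset.card_erase_of_mem (P.min'_mem hP)
          _ ≤ n := by omega
      have hreal : ∀ e ∈ C, |d e.1 - d e.2| = m * |u e.1 - u e.2| + |d' e.1 - d' e.2| := by
        intro e _
        by_cases h1 : e.1 ∈ S <;> by_cases h2 : e.2 ∈ S
        · obtain ⟨ha, ha'⟩ := hduS e.1 h1
          obtain ⟨hb, hb'⟩ := hduS e.2 h2
          have hu1 : u e.1 = 1 := if_pos h1
          have hu2 : u e.2 = 1 := if_pos h2
          rw [ha, hb, hu1, hu2]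
          rw [show m + d' e.1 - (m + d' e.2) = d' e.1 - d' e.2 by ring]
          simp
        · obtain ⟨ha, ha'⟩ := hduS e.1 h1
          obtain ⟨hb, hb', hu2⟩ := hduN e.2 h2
          have hu1 : u e.1 = 1 := if_pos h1
          rw [ha, hb, hb', hu1, hu2, sub_zero, sub_zero, sub_zero,
            abs_of_nonneg (by linarith : (0:ℝ) ≤ m + d' e.1), abs_of_nonneg ha', abs_one]
          ring
        · obtain ⟨ha, ha', hu1⟩ := hduN e.1 h1
          obtain ⟨hb, hb'⟩ := hduS e.2 h2
          have hu2 : u e.2 = 1 := if_pos h2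
          rw [ha, hb, ha', hu1, hu2, zero_sub, zero_sub, zero_sub, abs_neg, abs_neg, abs_neg,
            abs_of_nonneg (by linarith : (0:ℝ) ≤ m + d' e.2), abs_of_nonneg hb', abs_one]
          ring
        · obtain ⟨ha, ha', hu1⟩ := hduN e.1 h1
          obtain ⟨hb, hb', hu2⟩ := hduN e.2 h2
          rw [ha, hb, ha', hb', hu1, hu2]
          simp
      have hl_id : l d = m * l u + l d' := by
        have hdu : d = m • u + d' := funext fun v => by
          simp only [hd'def, Pi.add_apply, Pi.smul_apply, smul_eq_mul]; ring
        rw [hdu, hl.map_add, hl.map_smul]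
        simp [smul_eq_mul]
      have hsumC : ∑ e ∈ C, cw e * |d e.1 - d e.2|
          = m * (∑ e ∈ C, cw e * |u e.1 - u e.2|) + ∑ e ∈ C, cw e * |d' e.1 - d' e.2| := by
        rw [Finset.mul_sum, ← Finset.sum_add_distrib]
        refine Finset.sum_congr rfl fun e he => ?_
        rw [hreal e he]
        ring
      have hgpart : ∑ v ∈ S, ((d v : ℝ) : EReal) * p v
          = (∑ v ∈ S, ((m : ℝ) : EReal) * p v) +
            ∑ v ∈ Finset.univ.filter (fun v => 0 < d' v), ((d' v : ℝ) : EReal) * p v := by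
        have step1 : ∀ v ∈ S, ((d v : ℝ) : EReal) * p v
            = ((m : ℝ) : EReal) * p v + ((d' v : ℝ) : EReal) * p v := by
          intro v hv
          obtain ⟨ha, ha'⟩ := hduS v hv
          rw [ha, EReal.coe_add,
            EReal.right_distrib_of_nonneg (by exact_mod_cast hm.le) (by exact_mod_cast ha')]
        rw [Finset.sum_congr rfl step1, Finset.sum_add_distrib]
        congr 1
        symm
        apply Finset.sum_subset
        · intro v hv
          have h2 := (Finset.mem_filter.mp hv).2
          refine (hmemS v).mpr ?_
          by_contra hvn
          rw [(hduN v (fun h => hvn ((hmemS v).mp h))).2.1] at h2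
          · exact absurd h2 (lt_irrefl 0)
        · intro v hv hnv
          have h3 : ¬ (0 < d' v) := fun h => hnv (Finset.mem_filter.mpr ⟨Finset.mem_univ v, h⟩)
          have h4 : d' v = 0 := le_antisymm (not_lt.mp h3) (hd'0 v)
          rw [h4]
          norm_cast
          exact zero_mul _
      have hfu : Finset.univ.filter (fun v => 0 < u v) = S := by
        ext v
        by_cases hv : v ∈ S <;> simp [hudef, hv]
      have hup : ∑ v ∈ S, ((u v : ℝ) : EReal) * p v = ∑ v ∈ S, p v := by
        refine Finset.sum_congr rfl fun v hv => ?_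
        have : u v = 1 := if_pos hv
        rw [this]
        norm_cast
        exact one_mul _
      have hPhid : Phi l C cw p d = ((m : ℝ) : EReal) * Phi l C cw p u + Phi l C cw p d' := by
        unfold Phi
        rw [hfu, hup, ← hSdef, hl_id, hsumC, hgpart,
          mul_add' hm (EReal.coe_ne_bot _) (sum_ne_bot' fun v _ => hp v),
          mul_sum' hm (fun v _ => hp v)]
        rw [show ((m * l u + l d' + (m * (∑ e ∈ C, cw e * |u e.1 - u e.2|)
            + ∑ e ∈ C, cw e * |d' e.1 - d' e.2|) : ℝ) : EReal)
          = ((m * (l u + ∑ e ∈ C, cw e * |u e.1 - u e.2|) : ℝ) : EReal)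
            + ((l d' + ∑ e ∈ C, cw e * |d' e.1 - d' e.2| : ℝ) : EReal) by
          rw [← EReal.coe_add]; norm_cast; ring]
        rw [EReal.coe_mul]
        abel
      rw [hPhid] at hneg
      by_cases hcase : Phi l C cw p u < 0
      · exact ⟨S, hudef ▸ hcase⟩
      · have h1 : (0 : EReal) ≤ ((m : ℝ) : EReal) * Phi l C cw p u :=
          mul_nonneg (by exact_mod_cast hm.le) (not_lt.mp hcase)
        have h2 : Phi l C cw p d' < 0 := by
          by_contra h3
          exact absurd hneg (not_lt.mpr (add_nonneg h1 (not_lt.mp h3)))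
        exact ih d' hcard' hd'0 h2


end Descent

theorem stmt_13 (E : Finset (V × V)) (w : V × V → ℝ) (hw : ∀ e ∈ E, 0 ≤ w e)
    (f : (V → ℝ) → ℝ) (hf : Differentiable ℝ f)
    (g : V → ℝ → EReal) (hgbot : ∀ v y, g v y ≠ ⊥)
    (gd : V → ℝ → ℝ → EReal)
    (hgd : ∀ v y, g v y ≠ ⊤ → ∀ dir : ℝ,
      HasDirDeriv (g v) y dir (gd v y dir) ∧ gd v y dir ≠ ⊥)
    (x : V → ℝ) (hx : objF E w f g x ≠ ⊤)
    (hdesc : ∃ d : V → ℝ, ∃ L : EReal,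
      HasDirDeriv (objF E w f g) x d L ∧ L < 0) :
    ∃ d : V → ℝ, (∀ v, d v = -1 ∨ d v = 0 ∨ d v = 1) ∧
      ∃ L : EReal, HasDirDeriv (objF E w f g) x d L ∧ L < 0 := by
  classical
  open DescentAux Descent in
  obtain ⟨d0, L, hL, hLneg⟩ := hdesc
  have hgfin : ∀ v, g v (x v) ≠ ⊤ := Descent.g_fin E w f g hgbot x hx
  set p : V → EReal := fun v => gd v (x v) 1 with hpdef
  set q : V → EReal := fun v => gd v (x v) (-1) with hqdef
  have hp : ∀ v, p v ≠ ⊥ := fun v => (hgd v (x v) (hgfin v) 1).2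
  have hq : ∀ v, q v ≠ ⊥ := fun v => (hgd v (x v) (hgfin v) (-1)).2
  have hDD : ∀ d : V → ℝ, HasDirDeriv (objF E w f g) x d (Descent.Dval E w f gd x d) :=
    Descent.hasDirDeriv_Dval E w f hf g hgbot gd hgd x hx
  -- dirG and Dval are never ⊥
  have hdirGbot : ∀ (dd : V → ℝ) v, Descent.dirG gd x dd v ≠ ⊥ := by
    intro dd v
    unfold Descent.dirG
    split_ifs with h1 h2
    · exact DescentAux.mul_ne_bot' h1 (hp v)
    · exact DescentAux.mul_ne_bot' (by linarith) (hq v)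
    · exact EReal.zero_ne_bot
  have hDbot : ∀ dd : V → ℝ, Descent.Dval E w f gd x dd ≠ ⊥ := fun dd =>
    DescentAux.add_ne_bot' (EReal.coe_ne_bot _)
      (DescentAux.sum_ne_bot' fun v _ => hdirGbot dd v)
  -- the given descent direction has derivative Dval d0
  have hDd0 : Descent.Dval E w f gd x d0 < 0 := by
    have huniq : L = Descent.Dval E w f gd x d0 := tendsto_nhds_unique hL (hDD d0)
    rwa [huniq] at hLneg
  -- sign segregation
  set dp : V → ℝ := fun v => max (d0 v) 0 with hdpdef
  set dm : V → ℝ := fun v => min (d0 v) 0 with hdmdef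
  have hsumpm : ∀ v, dp v + dm v = d0 v := fun v => by
    simp only [hdpdef, hdmdef]
    rw [max_add_min, add_zero]
  have habs_split : ∀ a b : ℝ, |a - b| = |max a 0 - max b 0| + |min a 0 - min b 0| := by
    intro a b
    rcases le_total a 0 with ha | ha <;> rcases le_total b 0 with hb | hb
    · rw [max_eq_right ha, max_eq_right hb, min_eq_left ha, min_eq_left hb]; simp
    · rw [max_eq_right ha, max_eq_left hb, min_eq_left ha, min_eq_right hb,
        zero_sub, sub_zero, abs_neg, abs_of_nonpos ha, abs_of_nonneg hb,
        abs_of_nonpos (by linarith : a - b ≤ 0)]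
      ring
    · rw [max_eq_left ha, max_eq_right hb, min_eq_right ha, min_eq_left hb,
        sub_zero, zero_sub, abs_neg, abs_of_nonneg ha, abs_of_nonpos hb,
        abs_of_nonneg (by linarith : (0:ℝ) ≤ a - b)]
      ring
    · rw [max_eq_left ha, max_eq_left hb, min_eq_right ha, min_eq_right hb]; simp
  have hsegT : Descent.Tval E w x d0 = Descent.Tval E w x dp + Descent.Tval E w x dm := by
    unfold Descent.Tval
    rw [← Finset.sum_add_distrib]
    refine Finset.sum_congr rfl fun e _ => ?_
    by_cases hxe : x e.1 = x e.2
    · rw [if_pos hxe, if_pos hxe, if_pos hxe]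
      have h1 : dp e.1 = max (d0 e.1) 0 := rfl
      have h2 : dp e.2 = max (d0 e.2) 0 := rfl
      have h3 : dm e.1 = min (d0 e.1) 0 := rfl
      have h4 : dm e.2 = min (d0 e.2) 0 := rfl
      rw [h1, h2, h3, h4, habs_split (d0 e.1) (d0 e.2)]
      ring
    · rw [if_neg hxe, if_neg hxe, if_neg hxe, ← hsumpm e.1, ← hsumpm e.2]
      ring
  have hsegG : ∀ v, Descent.dirG gd x d0 v
      = Descent.dirG gd x dp v + Descent.dirG gd x dm v := by
    intro v
    rcases lt_trichotomy (d0 v) 0 with hv | hv | hv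
    · have h1 : dp v = 0 := max_eq_right hv.le
      have h2 : dm v = d0 v := min_eq_left hv.le
      unfold Descent.dirG
      rw [h1, h2]
      simp [hv, hv.asymm, lt_irrefl]
    · have h1 : dp v = 0 := by rw [hdpdef]; simp [hv]
      have h2 : dm v = 0 := by rw [hdmdef]; simp [hv]
      unfold Descent.dirG
      rw [h1, h2, hv]
      simp
    · have h1 : dp v = d0 v := max_eq_left hv.le
      have h2 : dm v = 0 := min_eq_right hv.le
      unfold Descent.dirG
      rw [h1, h2]
      simp [hv, hv.asymm, lt_irrefl]
  have hfd : fderiv ℝ f x d0 = fderiv ℝ f x dp + fderiv ℝ f x dm := by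
    have h1 := map_add (fderiv ℝ f x) dp dm
    have h2 : dp + dm = d0 := funext fun v => hsumpm v
    rw [h2] at h1
    exact h1
  have hseg : Descent.Dval E w f gd x d0
      = Descent.Dval E w f gd x dp + Descent.Dval E w f gd x dm := by
    unfold Descent.Dval
    rw [hfd, hsegT, Finset.sum_congr rfl fun v _ => hsegG v, Finset.sum_add_distrib]
    rw [show ((fderiv ℝ f x dp + fderiv ℝ f x dm + (Descent.Tval E w x dp
        + Descent.Tval E w x dm) : ℝ) : EReal)
      = ((fderiv ℝ f x dp + Descent.Tval E w x dp : ℝ) : EReal)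
        + ((fderiv ℝ f x dm + Descent.Tval E w x dm : ℝ) : EReal) by
      rw [← EReal.coe_add]; norm_cast; ring]
    abel
  -- matching with Phi
  set C : Finset (V × V) := E.filter (fun e => x e.1 = x e.2) with hCdef
  set lp : (V → ℝ) → ℝ := fun d => fderiv ℝ f x d +
    ∑ e ∈ E.filter (fun e => ¬ x e.1 = x e.2),
      w e * Real.sign (x e.1 - x e.2) * (d e.1 - d e.2) with hlpdef
  set lm : (V → ℝ) → ℝ := fun d => fderiv ℝ f x (fun v => -(d v)) +
    ∑ e ∈ E.filter (fun e => ¬ x e.1 = x e.2),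
      w e * Real.sign (x e.1 - x e.2) * ((-(d e.1)) - (-(d e.2))) with hlmdef
  have hlp : IsLinearMap ℝ lp := by
    constructor
    · intro a b
      simp only [hlpdef, Pi.add_apply, map_add]
      simp only [show ∀ e : V × V, w e * Real.sign (x e.1 - x e.2) * (a e.1 + b e.1 - (a e.2 + b e.2))
          = w e * Real.sign (x e.1 - x e.2) * (a e.1 - a e.2)
            + w e * Real.sign (x e.1 - x e.2) * (b e.1 - b e.2) from fun e => by ring]
      rw [Finset.sum_add_distrib]
      ring
    · intro c a
      simp only [hlpdef, Pi.smul_apply, smul_eq_mul, map_smul]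
      simp only [show ∀ e : V × V, w e * Real.sign (x e.1 - x e.2) * (c * a e.1 - c * a e.2)
          = c * (w e * Real.sign (x e.1 - x e.2) * (a e.1 - a e.2)) from fun e => by ring]
      rw [← Finset.mul_sum]
      ring
  have hlm : IsLinearMap ℝ lm := by
    constructor
    · intro a b
      simp only [hlmdef, Pi.add_apply]
      rw [show (fun v => -(a v + b v)) = (fun v => -(a v)) + (fun v => -(b v)) from
        funext fun v => by simp [Pi.add_apply]; try ring, map_add]
      simp only [show ∀ e : V × V, w e * Real.sign (x e.1 - x e.2) * (-(a e.1 + b e.1) - -(a e.2 + b e.2))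
          = w e * Real.sign (x e.1 - x e.2) * (-(a e.1) - -(a e.2))
            + w e * Real.sign (x e.1 - x e.2) * (-(b e.1) - -(b e.2)) from fun e => by ring]
      rw [Finset.sum_add_distrib]
      ring
    · intro c a
      simp only [hlmdef, Pi.smul_apply, smul_eq_mul]
      rw [show (fun v => -(c * a v)) = c • (fun v => -(a v)) from
        funext fun v => by simp [Pi.smul_apply, smul_eq_mul]; try ring, map_smul]
      simp only [show ∀ e : V × V, w e * Real.sign (x e.1 - x e.2) * (-(c * a e.1) - -(c * a e.2))
          = c * (w e * Real.sign (x e.1 - x e.2) * (-(a e.1) - -(a e.2))) from fun e => by ring]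
      rw [← Finset.mul_sum, smul_eq_mul]
      ring
  have hmatch_pos : ∀ d : V → ℝ, (∀ v, 0 ≤ d v) →
      Descent.Dval E w f gd x d = Descent.Phi lp C w p d := by
    intro d hd
    unfold Descent.Dval Descent.Phi Descent.Tval
    congr 1
    · rw [Finset.sum_ite, ← hCdef]
      simp only [hlpdef]
      norm_cast
      ring
    · rw [Finset.sum_filter]
      refine Finset.sum_congr rfl fun v _ => ?_
      unfold Descent.dirG
      by_cases hv : 0 < d v
      · rw [if_pos hv, if_pos hv, hpdef]
      · rw [if_neg hv, if_neg hv, if_neg (not_lt.mpr (hd v))]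
  have hmatch_neg : ∀ d : V → ℝ, (∀ v, 0 ≤ d v) →
      Descent.Dval E w f gd x (fun v => -(d v)) = Descent.Phi lm C w q d := by
    intro d hd
    unfold Descent.Dval Descent.Phi Descent.Tval
    congr 1
    · rw [Finset.sum_congr rfl (fun e (_ : e ∈ E) => show
          (if x e.1 = x e.2 then w e * |(-(d e.1)) - (-(d e.2))|
            else w e * Real.sign (x e.1 - x e.2) * ((-(d e.1)) - (-(d e.2))))
          = (if x e.1 = x e.2 then w e * |d e.1 - d e.2|
            else w e * Real.sign (x e.1 - x e.2) * ((-(d e.1)) - (-(d e.2)))) from by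
        by_cases hxe : x e.1 = x e.2
        · rw [if_pos hxe, if_pos hxe, show (-(d e.1)) - (-(d e.2)) = -(d e.1 - d e.2) by ring,
            abs_neg]
        · rw [if_neg hxe, if_neg hxe])]
      rw [Finset.sum_ite, ← hCdef]
      simp only [hlmdef]
      norm_cast
      ring
    · rw [Finset.sum_filter]
      refine Finset.sum_congr rfl fun v _ => ?_
      unfold Descent.dirG
      by_cases hv : 0 < d v
      · have ha1 : ¬ (0:ℝ) < -(d v) := by linarith
        have ha2 : -(d v) < 0 := by linarith
        simp [hv, ha1, ha2, hqdef]
      · have h0 : d v = 0 := le_antisymm (not_lt.mp hv) (hd v)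
        simp [hv, h0]
  -- one of the two signed parts is negative
  have hcases : Descent.Dval E w f gd x dp < 0 ∨ Descent.Dval E w f gd x dm < 0 := by
    by_contra hcon
    push_neg at hcon
    obtain ⟨h1, h2⟩ := hcon
    rw [hseg] at hDd0
    exact absurd hDd0 (not_lt.mpr (add_nonneg h1 h2))
  rcases hcases with hneg | hneg
  · -- positive part
    have hdp0 : ∀ v, 0 ≤ dp v := fun v => le_max_right _ _
    have hPhi : Descent.Phi lp C w p dp < 0 := by rw [← hmatch_pos dp hdp0]; exact hneg
    obtain ⟨S, hS⟩ := Descent.key lp hlp C w p hp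
      ((Finset.univ.image dp).filter (fun t => 0 < t)).card dp le_rfl hdp0 hPhi
    refine ⟨fun v => if v ∈ S then 1 else 0, fun v => ?_, ?_⟩
    · by_cases hv : v ∈ S
      · right; right; simp [hv]
      · right; left; simp [hv]
    · refine ⟨Descent.Dval E w f gd x (fun v => if v ∈ S then 1 else 0), hDD _, ?_⟩
      rw [hmatch_pos _ (fun v => by by_cases hv : v ∈ S <;> simp [hv])]
      exact hS
  · -- negative part
    set em : V → ℝ := fun v => -(dm v) with hemdef
    have hem0 : ∀ v, 0 ≤ em v := fun v => by
      simp only [hemdef]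
      have : dm v ≤ 0 := min_le_right _ _
      linarith
    have hdm_eq : (fun v => -(em v)) = dm := funext fun v => by simp [hemdef]
    have hPhi : Descent.Phi lm C w q em < 0 := by
      rw [← hmatch_neg em hem0, hdm_eq]
      exact hneg
    obtain ⟨S, hS⟩ := Descent.key lm hlm C w q hq
      ((Finset.univ.image em).filter (fun t => 0 < t)).card em le_rfl hem0 hPhi
    refine ⟨fun v => if v ∈ S then -1 else 0, fun v => ?_, ?_⟩
    · by_cases hv : v ∈ S
      · left; simp [hv]
      · right; left; simp [hv]
    · refine ⟨Descent.Dval E w f gd x (fun v => if v ∈ S then -1 else 0), hDD _, ?_⟩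
      have hneg_eq : (fun v => -(if v ∈ S then (1:ℝ) else 0))
          = (fun v => if v ∈ S then (-1:ℝ) else 0) := funext fun v => by
        by_cases hv : v ∈ S <;> simp [hv]
      rw [← hneg_eq, hmatch_neg _ (fun v => by by_cases hv : v ∈ S <;> simp [hv])]
      exact hS
end

section
/- (Stronger ternary descent certificate) Under the same assumptions (F = f + Σ_v g_v + graph total variation, f differentiable, g_v directionally differentiable, w ≥ 0), if F admits a strict descent direction at x ∈ dom F, then F admits a strict descent direction in {−1,0}^V ∪ {0,+1}^V; i.e., there is a strict descent direction of the form s·1_U for some subset U ⊆ V and s ∈ {−1, +1}. -/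
open Filter Set Finset

variable {V : Type*} [Fintype V] [DecidableEq V]

open Topology

namespace SH

lemma coe_mul_top_ne_bot {c : ℝ} (hc : 0 < c) {P : EReal} (hP : P ≠ ⊥) : (c:EReal) * P ≠ ⊥ := by
  induction P with
  | bot => exact absurd rfl hP
  | coe p => rw [← EReal.coe_mul]; exact EReal.coe_ne_bot _
  | top => rw [EReal.coe_mul_top_of_pos hc]; exact top_ne_bot

lemma neg_mul_ne_top_ne_bot {c : ℝ} (hc : c < 0) {P : EReal} (hP : P ≠ ⊤) : (c:EReal) * P ≠ ⊥ := by
  induction P with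
  | bot => rw [EReal.coe_mul_bot_of_neg hc]; exact top_ne_bot
  | coe p => rw [← EReal.coe_mul]; exact EReal.coe_ne_bot _
  | top => exact absurd rfl hP

lemma add_ne_bot {P Q : EReal} (hP : P ≠ ⊥) (hQ : Q ≠ ⊥) : P + Q ≠ ⊥ := by
  induction P with
  | bot => exact absurd rfl hP
  | coe p =>
    induction Q with
    | bot => exact absurd rfl hQ
    | coe q => rw [← EReal.coe_add]; exact EReal.coe_ne_bot _
    | top => rw [EReal.add_top_of_ne_bot (EReal.coe_ne_bot p)]; exact top_ne_bot
  | top => rw [EReal.top_add_of_ne_bot hQ]; exact top_ne_bot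

lemma sum_ne_bot {ι : Type*} (s : Finset ι) (h : ι → EReal) (hh : ∀ i ∈ s, h i ≠ ⊥) :
    ∑ i ∈ s, h i ≠ ⊥ := by
  classical
  induction s using Finset.induction with
  | empty => simp
  | @insert a s' hx ih =>
    rw [Finset.sum_insert hx]
    exact add_ne_bot (hh a (by simp)) (ih fun i hi => hh i (by simp [hi]))

lemma sub_coe_ne_bot {P : EReal} (hP : P ≠ ⊥) (c : ℝ) : P - (c:EReal) ≠ ⊥ := by
  induction P with
  | bot => exact absurd rfl hP
  | coe p => rw [← EReal.coe_sub]; exact EReal.coe_ne_bot _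
  | top => rw [EReal.top_sub_coe]; exact top_ne_bot

lemma coe_sub_ne_top {G : EReal} (hG : G ≠ ⊥) (c : ℝ) : (c:EReal) - G ≠ ⊤ := by
  induction G with
  | bot => exact absurd rfl hG
  | coe p => rw [← EReal.coe_sub]; exact EReal.coe_ne_top _
  | top => rw [EReal.sub_top]; exact bot_ne_top

lemma add_coe_ne_top {G : EReal} (hG : G ≠ ⊤) (c : ℝ) : G + (c:EReal) ≠ ⊤ := by
  induction G with
  | bot => rw [EReal.bot_add]; exact bot_ne_top
  | coe p => rw [← EReal.coe_add]; exact EReal.coe_ne_top _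
  | top => exact absurd rfl hG

/-- positive real scalar distributes over any EReal addition -/
lemma pos_mul_add {c : ℝ} (hc : 0 < c) (P Q : EReal) :
    (c:EReal) * (P + Q) = c * P + c * Q := by
  induction P with
  | bot =>
    rw [EReal.bot_add, EReal.coe_mul_bot_of_pos hc, EReal.bot_add]
  | coe p =>
    induction Q with
    | bot => rw [EReal.add_bot, EReal.coe_mul_bot_of_pos hc, ← EReal.coe_mul, EReal.add_bot]
    | coe q => rw [← EReal.coe_add, ← EReal.coe_mul, ← EReal.coe_mul, ← EReal.coe_mul,
        ← EReal.coe_add, mul_add]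
    | top => rw [EReal.add_top_of_ne_bot (EReal.coe_ne_bot p), EReal.coe_mul_top_of_pos hc,
        ← EReal.coe_mul, EReal.add_top_of_ne_bot (EReal.coe_ne_bot _)]
  | top =>
    induction Q with
    | bot => rw [EReal.add_bot, EReal.coe_mul_bot_of_pos hc, EReal.coe_mul_top_of_pos hc,
        EReal.add_bot]
    | coe q => rw [EReal.top_add_coe, EReal.coe_mul_top_of_pos hc, ← EReal.coe_mul,
        EReal.top_add_coe]
    | top => rw [EReal.top_add_top, EReal.coe_mul_top_of_pos hc, EReal.top_add_top]

lemma pos_mul_sum {c : ℝ} (hc : 0 < c) {ι : Type*} (s : Finset ι) (h : ι → EReal) :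
    (c:EReal) * (∑ i ∈ s, h i) = ∑ i ∈ s, (c:EReal) * h i := by
  classical
  induction s using Finset.induction with
  | empty => simp
  | @insert a s' hx ih =>
    rw [Finset.sum_insert hx, Finset.sum_insert hx, pos_mul_add hc, ih]

lemma coe_mul_coe_mul (a b : ℝ) (P : EReal) :
    (a:EReal) * ((b:EReal) * P) = ((a*b : ℝ):EReal) * P := by
  have htop : ∀ a b : ℝ, (a:EReal) * ((b:EReal) * ⊤) = ((a*b : ℝ):EReal) * ⊤ := by
    intro a b
    rcases lt_trichotomy b 0 with hb | rfl | hb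
    · rw [EReal.coe_mul_top_of_neg hb]
      rcases lt_trichotomy a 0 with ha | rfl | ha
      · rw [EReal.coe_mul_bot_of_neg ha, EReal.coe_mul_top_of_pos (mul_pos_of_neg_of_neg ha hb)]
      · simp
      · rw [EReal.coe_mul_bot_of_pos ha, EReal.coe_mul_top_of_neg (mul_neg_of_pos_of_neg ha hb)]
    · simp
    · rw [EReal.coe_mul_top_of_pos hb]
      rcases lt_trichotomy a 0 with ha | rfl | ha
      · rw [EReal.coe_mul_top_of_neg ha, EReal.coe_mul_top_of_neg (mul_neg_of_neg_of_pos ha hb)]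
      · simp
      · rw [EReal.coe_mul_top_of_pos ha, EReal.coe_mul_top_of_pos (mul_pos ha hb)]
  induction P with
  | coe p => rw [← EReal.coe_mul, ← EReal.coe_mul, ← EReal.coe_mul, mul_assoc]
  | top => exact htop a b
  | bot =>
    have : (⊥ : EReal) = -⊤ := rfl
    rw [this, mul_neg, mul_neg, mul_neg, htop a b]

lemma pos_mul_delta {c : ℝ} (hc : 0 < c) (a b : ℝ) {G : EReal} (hG : G ≠ ⊥) :
    (c:EReal) * ((a:EReal) + G + (b:EReal)) = ((c*a : ℝ):EReal) + (c:EReal) * G + ((c*b : ℝ):EReal) := by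
  rw [pos_mul_add hc, pos_mul_add hc, ← EReal.coe_mul, ← EReal.coe_mul]

lemma neg_mul_delta {c : ℝ} (hc : c < 0) (a b : ℝ) {G : EReal} (hG : G ≠ ⊥) :
    (c:EReal) * ((a:EReal) - G + (b:EReal)) =
      ((c*a : ℝ):EReal) + ((-c : ℝ):EReal) * G + ((c*b : ℝ):EReal) := by
  induction G with
  | bot => exact absurd rfl hG
  | coe p =>
    rw [← EReal.coe_sub, ← EReal.coe_add, ← EReal.coe_mul, ← EReal.coe_mul, ← EReal.coe_add,
      ← EReal.coe_add]
    norm_cast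
    ring
  | top =>
    rw [EReal.sub_top, EReal.bot_add, EReal.coe_mul_bot_of_neg hc,
      EReal.coe_mul_top_of_pos (by linarith), EReal.add_top_of_ne_bot (EReal.coe_ne_bot _),
      EReal.top_add_coe]

lemma nonneg_distrib {a b : ℝ} (ha : 0 ≤ a) (hb : 0 ≤ b) (P : EReal) :
    (((a+b) : ℝ):EReal) * P = (a:EReal) * P + (b:EReal) * P := by
  rw [EReal.coe_add]
  exact EReal.right_distrib_of_nonneg (by exact_mod_cast ha) (by exact_mod_cast hb)

lemma sub_add_sub {P Q : EReal} (hP : P ≠ ⊥) (hQ : Q ≠ ⊥) (c c' : ℝ) :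
    (P + Q) - (((c + c') : ℝ):EReal) = (P - (c:EReal)) + (Q - (c':EReal)) := by
  induction P with
  | bot => exact absurd rfl hP
  | coe p =>
    induction Q with
    | bot => exact absurd rfl hQ
    | coe q => norm_cast; ring
    | top =>
      rw [EReal.add_top_of_ne_bot (EReal.coe_ne_bot p), EReal.top_sub_coe, EReal.top_sub_coe,
        ← EReal.coe_sub, EReal.add_top_of_ne_bot (EReal.coe_ne_bot _)]
  | top =>
    rw [EReal.top_add_of_ne_bot hQ, EReal.top_sub_coe, EReal.top_sub_coe,
      EReal.top_add_of_ne_bot (sub_coe_ne_bot hQ _)]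

lemma sub_sum {ι : Type*} (s : Finset ι) (P : ι → EReal) (c : ι → ℝ)
    (hP : ∀ i ∈ s, P i ≠ ⊥) :
    (∑ i ∈ s, P i) - ((∑ i ∈ s, c i : ℝ):EReal) = ∑ i ∈ s, (P i - (c i : EReal)) := by
  classical
  induction s using Finset.induction with
  | empty => simp
  | @insert a s' hx ih =>
    rw [Finset.sum_insert hx, Finset.sum_insert hx, Finset.sum_insert hx,
      sub_add_sub (hP a (by simp)) (sum_ne_bot s' P fun i hi => hP i (by simp [hi])),
      ih fun i hi => hP i (by simp [hi])]

lemma sub3 (a b c s e : ℝ) {Q : EReal} (hQ : Q ≠ ⊥) :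
    ((a:EReal) + Q + (b:EReal)) - ((c:EReal) + (s:EReal) + (e:EReal)) =
      ((a - c : ℝ):EReal) + (Q - (s:EReal)) + ((b - e : ℝ):EReal) := by
  induction Q with
  | bot => exact absurd rfl hQ
  | coe q => norm_cast; ring
  | top =>
    rw [EReal.add_top_of_ne_bot (EReal.coe_ne_bot a), EReal.top_add_coe, ← EReal.coe_add,
      ← EReal.coe_add, EReal.top_sub_coe, EReal.top_sub_coe,
      EReal.add_top_of_ne_bot (EReal.coe_ne_bot _), EReal.top_add_coe]

lemma pos_mul_neg_iff {c : ℝ} (hc : 0 < c) {P : EReal} : (c:EReal) * P < 0 ↔ P < 0 := by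
  induction P with
  | bot => simpa [EReal.coe_mul_bot_of_pos hc] using EReal.bot_lt_zero
  | coe p =>
    rw [← EReal.coe_mul]
    norm_cast
    constructor
    · intro h; nlinarith
    · intro h; exact mul_neg_of_pos_of_neg hc h
  | top => simp [EReal.coe_mul_top_of_pos hc]

lemma Tendsto.ereal_add {α : Type*} {l : Filter α} {F G : α → EReal} {A B : EReal}
    (hF : Tendsto F l (𝓝 A)) (hG : Tendsto G l (𝓝 B)) (hA : A ≠ ⊥) (hB : B ≠ ⊥) :
    Tendsto (fun t => F t + G t) l (𝓝 (A + B)) :=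
  (EReal.continuousAt_add (p := (A, B)) (Or.inr hB) (Or.inl hA)).tendsto.comp
    (hF.prodMk_nhds hG)

lemma tendsto_ereal_sum {α ι : Type*} {l : Filter α} (s : Finset ι) (F : ι → α → EReal)
    (L : ι → EReal) (hF : ∀ i ∈ s, Tendsto (F i) l (𝓝 (L i))) (hL : ∀ i ∈ s, L i ≠ ⊥) :
    Tendsto (fun t => ∑ i ∈ s, F i t) l (𝓝 (∑ i ∈ s, L i)) := by
  classical
  induction s using Finset.induction with
  | empty => simpa using tendsto_const_nhds
  | @insert a s' hx ih =>
    simp only [Finset.sum_insert hx]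
    exact Tendsto.ereal_add (hF a (by simp))
      (ih (fun i hi => hF i (by simp [hi])) (fun i hi => hL i (by simp [hi])))
      (hL a (by simp)) (sum_ne_bot s' L fun i hi => hL i (by simp [hi]))

lemma hasDirDeriv'_unique {Ω : Type*} [AddCommGroup Ω] [Module ℝ Ω]
    {h : Ω → EReal} {x d : Ω} {L₁ L₂ : EReal}
    (h₁ : HasDirDeriv h x d L₁) (h₂ : HasDirDeriv h x d L₂) : L₁ = L₂ :=
  tendsto_nhds_unique h₁ h₂

lemma mul_map_self : ∀ {c : ℝ}, 0 < c →
    Tendsto (fun t : ℝ => c * t) (𝓝[>] (0:ℝ)) (𝓝[>] (0:ℝ)) := by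
  intro c hc
  rw [tendsto_nhdsWithin_iff]
  constructor
  · have : Tendsto (fun t : ℝ => c * t) (𝓝 0) (𝓝 (c * 0)) :=
      (continuous_const.mul continuous_id).tendsto 0
    rw [mul_zero] at this
    exact this.mono_left nhdsWithin_le_nhds
  · filter_upwards [self_mem_nhdsWithin] with t ht
    exact mul_pos hc ht

lemma hasDirDeriv'_smul_pos {h : ℝ → EReal} {y r : ℝ} {L : EReal}
    (hd : HasDirDeriv h y r L) {c : ℝ} (hc : 0 < c) :
    HasDirDeriv h y (c * r) ((c:EReal) * L) := by
  unfold HasDirDeriv at hd ⊢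
  have h1 : Tendsto (fun t : ℝ => (((c*t)⁻¹ : ℝ) : EReal) * (h (y + (c*t) • r) - h y))
      (𝓝[>] (0:ℝ)) (𝓝 L) := hd.comp (mul_map_self hc)
  have h2 : Tendsto (fun z : EReal => (c:EReal) * z) (𝓝 L) (𝓝 ((c:EReal) * L)) := by
    have hcne : ((c:ℝ) : EReal) ≠ 0 := by
      simp only [ne_eq, EReal.coe_eq_zero]; exact ne_of_gt hc
    exact (EReal.continuousAt_mul (p := ((c:EReal), L)) (Or.inl hcne) (Or.inl hcne)
      (Or.inl (EReal.coe_ne_bot c)) (Or.inl (EReal.coe_ne_top c))).tendsto.comp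
      (Continuous.tendsto (by fun_prop) L)
  have h3 := h2.comp h1
  apply h3.congr'
  filter_upwards [self_mem_nhdsWithin] with t ht
  simp only [Function.comp_apply, smul_eq_mul]
  rw [coe_mul_coe_mul]
  have ht0 : (t:ℝ) ≠ 0 := ne_of_gt ht
  have hc0 : c ≠ 0 := ne_of_gt hc
  have : c * (c*t)⁻¹ = t⁻¹ := by field_simp
  rw [this]
  ring_nf

lemma tendsto_slope_part {E' : Type*} [NormedAddCommGroup E'] [NormedSpace ℝ E']
    (f : E' → ℝ) (hf : Differentiable ℝ f) (x d : E') :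
    Tendsto (fun t : ℝ => ((t⁻¹ * (f (x + t • d) - f x) : ℝ) : EReal)) (𝓝[>] (0:ℝ))
      (𝓝 ((fderiv ℝ f x d : ℝ) : EReal)) := by
  rw [EReal.tendsto_coe]
  have hinner : HasDerivAt (fun t : ℝ => x + t • d) d 0 := by
    have : HasDerivAt (fun t : ℝ => t • d) ((1:ℝ) • d) 0 := (hasDerivAt_id 0).smul_const d
    rw [one_smul] at this
    exact this.const_add x
  have houter : HasFDerivAt f (fderiv ℝ f x) ((fun t : ℝ => x + t • d) 0) := by
    simp only [zero_smul, add_zero]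
    exact (hf x).hasFDerivAt
  have hφ : HasDerivAt (f ∘ fun t : ℝ => x + t • d) (fderiv ℝ f x d) 0 :=
    houter.comp_hasDerivAt 0 hinner
  have := hasDerivAt_iff_tendsto_slope.1 hφ
  have h2 := this.mono_left (nhdsWithin_mono 0 (fun t ht => ne_of_gt ht : Set.Ioi (0:ℝ) ⊆ {(0:ℝ)}ᶜ))
  apply h2.congr'
  filter_upwards [self_mem_nhdsWithin] with t ht
  rw [slope_def_field]
  simp only [Function.comp_apply, zero_smul, add_zero, sub_zero]
  rw [div_eq_inv_mul]

lemma abs_quot_eventually (y c : ℝ) :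
    ∀ᶠ t in 𝓝[>] (0:ℝ),
      t⁻¹ * (|y + t * c| - |y|) = (if y = 0 then |c| else Real.sign y * c) := by
  by_cases hy : y = 0
  · subst hy
    filter_upwards [self_mem_nhdsWithin] with t ht
    simp only [if_pos rfl, if_true, zero_add, abs_zero, sub_zero, abs_mul, abs_of_pos (show (0:ℝ) < t from ht)]
    rw [← mul_assoc, inv_mul_cancel₀ (ne_of_gt ht), one_mul]
  · have hε : 0 < |y|/(|c|+1) := div_pos (abs_pos.2 hy) (by positivity)
    have hIoo : Set.Ioo (0:ℝ) (|y|/(|c|+1)) ∈ 𝓝[>] (0:ℝ) :=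
      Ioo_mem_nhdsGT_of_mem ⟨le_refl _, hε⟩
    filter_upwards [hIoo] with t ht
    obtain ⟨ht0, htε⟩ := ht
    have htc : |t * c| < |y| := by
      rw [abs_mul, abs_of_pos ht0]
      calc t * |c| ≤ t * (|c|+1) := by nlinarith
        _ < |y| := by
          rw [← lt_div_iff₀ (by positivity)] at *
          exact htε
    rw [if_neg hy]
    rcases lt_or_gt_of_ne hy with hneg | hpos
    · have h1 : y + t * c < 0 := by
        cases abs_lt.1 htc with
        | intro hl hr =>
          rw [abs_of_neg hneg] at hr
          linarith
      rw [abs_of_neg hneg, abs_of_neg h1, Real.sign_of_neg hneg]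
      field_simp
      ring
    · have h1 : 0 < y + t * c := by
        cases abs_lt.1 htc with
        | intro hl hr =>
          rw [abs_of_pos hpos] at hl
          linarith
      rw [abs_of_pos hpos, abs_of_pos h1, Real.sign_of_pos hpos]
      field_simp
      ring

lemma coe_sum {ι : Type*} (s : Finset ι) (c : ι → ℝ) :
    ((∑ i ∈ s, c i : ℝ) : EReal) = ∑ i ∈ s, ((c i : ℝ) : EReal) := by
  classical
  induction s using Finset.induction with
  | empty => simp
  | @insert a s' hx ih => rw [Finset.sum_insert hx, Finset.sum_insert hx, EReal.coe_add, ih]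

lemma abs_split (a b : ℝ) :
    |a - b| = |max a 0 - max b 0| + |min a 0 - min b 0| := by
  have ha := max_add_min a 0
  have hb := max_add_min b 0
  rcases le_total b a with h | h
  · have h1 : max b 0 ≤ max a 0 := max_le_max h (le_refl _)
    have h2 : min b 0 ≤ min a 0 := min_le_min h (le_refl _)
    rw [abs_of_nonneg (by linarith), abs_of_nonneg (by linarith), abs_of_nonneg (by linarith)]
    linarith
  · have h1 : max a 0 ≤ max b 0 := max_le_max h (le_refl _)
    have h2 : min a 0 ≤ min b 0 := min_le_min h (le_refl _)
    rw [abs_of_nonpos (by linarith), abs_of_nonpos (by linarith), abs_of_nonpos (by linarith)]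
    linarith

lemma split_sum {M : Type*} [AddCommMonoid M] (d : V → ℝ) (h : V → M)
    (hzero : ∀ v, d v = 0 → h v = 0) :
    ∑ v, h v = (∑ v ∈ univ.filter (fun v => 0 < d v), h v) +
      ∑ v ∈ univ.filter (fun v => d v < 0), h v := by
  classical
  rw [← Finset.sum_filter_add_sum_filter_not univ (fun v => 0 < d v) h]
  congr 1
  refine (Finset.sum_subset ?_ ?_).symm
  · intro v hv
    simp only [Finset.mem_filter, Finset.mem_univ, true_and] at hv ⊢
    exact not_lt_of_gt hv
  · intro v hv hnv
    simp only [Finset.mem_filter, Finset.mem_univ, true_and, not_lt] at hv hnv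
    exact hzero v (le_antisymm hv hnv)

lemma g_ne_top (E : Finset (V × V)) (w : V × V → ℝ) (f : (V → ℝ) → ℝ)
    (g : V → ℝ → EReal) (hgbot : ∀ v y, g v y ≠ ⊥) (x : V → ℝ)
    (hx : objF E w f g x ≠ ⊤) (v : V) : g v (x v) ≠ ⊤ := by
  intro htop
  apply hx
  unfold objF
  have h1 : ∑ u, g u (x u) = ⊤ := by
    rw [← Finset.sum_erase_add univ _ (Finset.mem_univ v), htop]
    exact EReal.add_top_of_ne_bot (sum_ne_bot _ _ fun i _ => hgbot i (x i))
  rw [h1, EReal.add_top_of_ne_bot (EReal.coe_ne_bot _), EReal.top_add_coe]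
lemma key_swap (E : Finset (V × V)) (w : V × V → ℝ) (x d : V → ℝ) :
    ∑ v, d v * (∑ e ∈ E.filter (fun e => e.1 = v ∨ e.2 = v),
        w e * Real.sign (x v - x (if e.1 = v then e.2 else e.1)))
      = ∑ e ∈ E, w e * (Real.sign (x e.1 - x e.2) * (d e.1 - d e.2)) := by
  classical
  have h1 : ∀ v, d v * (∑ e ∈ E.filter (fun e => e.1 = v ∨ e.2 = v),
      w e * Real.sign (x v - x (if e.1 = v then e.2 else e.1)))
      = ∑ e ∈ E, (if e.1 = v ∨ e.2 = v then
          d v * (w e * Real.sign (x v - x (if e.1 = v then e.2 else e.1))) else 0) := by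
    intro v
    rw [Finset.mul_sum, Finset.sum_filter]
  simp only [h1]
  rw [Finset.sum_comm]
  apply Finset.sum_congr rfl
  intro e _
  by_cases h12 : e.1 = e.2
  · have hx : x e.1 - x e.2 = 0 := by rw [h12, sub_self]
    rw [hx, Real.sign_zero]
    have : ∀ v, (if e.1 = v ∨ e.2 = v then
        d v * (w e * Real.sign (x v - x (if e.1 = v then e.2 else e.1))) else 0) = 0 := by
      intro v
      by_cases h1 : e.1 = v
      · rw [if_pos (Or.inl h1), if_pos h1, ← h1, ← h12, sub_self, Real.sign_zero]
        ring
      · by_cases h2 : e.2 = v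
        · exact absurd (h12.trans h2) h1
        · rw [if_neg (by tauto)]
    simp only [this, Finset.sum_const_zero]
    ring
  · have h21 : ¬ e.2 = e.1 := fun h => h12 h.symm
    have hfun : ∀ v, (if e.1 = v ∨ e.2 = v then
        d v * (w e * Real.sign (x v - x (if e.1 = v then e.2 else e.1))) else 0)
        = (if e.1 = v then d v * (w e * Real.sign (x e.1 - x e.2)) else 0)
          + (if e.2 = v then d v * (w e * Real.sign (x e.2 - x e.1)) else 0) := by
      intro v
      by_cases h1 : e.1 = v
      · subst h1
        rw [if_pos (Or.inl rfl), if_pos rfl, if_pos rfl, if_neg h21, add_zero]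
      · by_cases h2 : e.2 = v
        · subst h2
          rw [if_pos (Or.inr rfl), if_neg h1, if_neg h1, if_pos rfl, zero_add]
        · rw [if_neg (by tauto), if_neg h1, if_neg h2, add_zero]
    simp only [hfun]
    rw [Finset.sum_add_distrib, Finset.sum_ite_eq, Finset.sum_ite_eq, if_pos (Finset.mem_univ _),
      if_pos (Finset.mem_univ _), ← neg_sub (x e.1) (x e.2), Real.sign_neg]
    ring

lemma TVlim_split (E : Finset (V × V)) (w : V × V → ℝ) (x d : V → ℝ) :
    ∑ e ∈ E, w e * (if x e.1 = x e.2 then |d e.1 - d e.2|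
        else Real.sign (x e.1 - x e.2) * (d e.1 - d e.2))
      = (∑ v, d v * (∑ e ∈ E.filter (fun e => e.1 = v ∨ e.2 = v),
          w e * Real.sign (x v - x (if e.1 = v then e.2 else e.1))))
        + ∑ e ∈ E.filter (fun e => x e.1 = x e.2), w e * |d e.1 - d e.2| := by
  classical
  have hpt : ∀ e ∈ E, w e * (if x e.1 = x e.2 then |d e.1 - d e.2|
        else Real.sign (x e.1 - x e.2) * (d e.1 - d e.2))
      = w e * (Real.sign (x e.1 - x e.2) * (d e.1 - d e.2))
        + (if x e.1 = x e.2 then w e * |d e.1 - d e.2| else 0) := by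
    intro e _
    by_cases hc : x e.1 = x e.2
    · rw [if_pos hc, if_pos hc, hc, sub_self, Real.sign_zero]
      ring
    · rw [if_neg hc, if_neg hc]
      ring
  rw [Finset.sum_congr rfl hpt, Finset.sum_add_distrib, ← Finset.sum_filter, key_swap]
lemma main_deriv (E : Finset (V × V)) (w : V × V → ℝ)
    (f : (V → ℝ) → ℝ) (hf : Differentiable ℝ f)
    (g : V → ℝ → EReal) (hgbot : ∀ v y, g v y ≠ ⊥)
    (gd : V → ℝ → ℝ → EReal)
    (hgd : ∀ v y, g v y ≠ ⊤ → ∀ dir : ℝ,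
      HasDirDeriv (g v) y dir (gd v y dir) ∧ gd v y dir ≠ ⊥)
    (x : V → ℝ) (hx : objF E w f g x ≠ ⊤) (d : V → ℝ) :
    HasDirDeriv (objF E w f g) x d (dirDerivVal E w f gd x d) := by
  classical
  have hgtop : ∀ v, g v (x v) ≠ ⊤ := g_ne_top E w f g hgbot x hx
  set s0 : V → ℝ := fun v => (g v (x v)).toReal with hs0
  have hgeq : ∀ v, g v (x v) = ((s0 v : ℝ) : EReal) :=
    fun v => (EReal.coe_toReal (hgtop v) (hgbot v (x v))).symm
  set Gfun : V → EReal := fun v =>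
    if 0 < d v then ((d v : ℝ) : EReal) * gd v (x v) 1
    else if d v < 0 then ((-(d v) : ℝ) : EReal) * gd v (x v) (-1) else 0 with hGfun
  have hGbot : ∀ v, Gfun v ≠ ⊥ := by
    intro v
    simp only [hGfun]
    split_ifs with h1 h2
    · exact coe_mul_top_ne_bot h1 (hgd v (x v) (hgtop v) 1).2
    · exact coe_mul_top_ne_bot (by linarith) (hgd v (x v) (hgtop v) (-1)).2
    · exact EReal.zero_ne_bot
  set TVD : (V × V) → ℝ := fun e => if x e.1 = x e.2 then |d e.1 - d e.2|
    else Real.sign (x e.1 - x e.2) * (d e.1 - d e.2) with hTVD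
  set TVlim : ℝ := ∑ e ∈ E, w e * TVD e with hTVlim
  have hval : ((fderiv ℝ f x d : ℝ) : EReal) + (∑ v, Gfun v) + ((TVlim : ℝ) : EReal)
      = dirDerivVal E w f gd x d := by
    have hfd : fderiv ℝ f x d = ∑ v, d v * fderiv ℝ f x (Pi.single v 1) := by
      have hd2 : d = ∑ v, d v • (Pi.single v (1:ℝ) : V → ℝ) := by
        funext j
        rw [Finset.sum_apply]
        simp only [Pi.smul_apply, Pi.single_apply, smul_eq_mul, mul_ite, mul_one, mul_zero]
        rw [Finset.sum_ite_eq univ j d]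
        simp
      conv_lhs => rw [hd2]
      rw [map_sum]
      exact Finset.sum_congr rfl fun v _ => by rw [map_smul, smul_eq_mul]
    have hP : ∀ v ∈ univ.filter (fun v => 0 < d v),
        ((d v : ℝ) : EReal) * deltaPlus E w f gd x v
          = ((d v * fderiv ℝ f x (Pi.single v 1) : ℝ) : EReal) + Gfun v
            + ((d v * (∑ e ∈ E.filter (fun e => e.1 = v ∨ e.2 = v),
                w e * Real.sign (x v - x (if e.1 = v then e.2 else e.1))) : ℝ) : EReal) := by
      intro v hv
      rw [Finset.mem_filter] at hv
      unfold deltaPlus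
      rw [pos_mul_delta hv.2 _ _ (hgd v (x v) (hgtop v) 1).2]
      simp only [hGfun, if_pos hv.2]
    have hN : ∀ v ∈ univ.filter (fun v => d v < 0),
        ((d v : ℝ) : EReal) * deltaMinus E w f gd x v
          = ((d v * fderiv ℝ f x (Pi.single v 1) : ℝ) : EReal) + Gfun v
            + ((d v * (∑ e ∈ E.filter (fun e => e.1 = v ∨ e.2 = v),
                w e * Real.sign (x v - x (if e.1 = v then e.2 else e.1))) : ℝ) : EReal) := by
      intro v hv
      rw [Finset.mem_filter] at hv
      unfold deltaMinus
      rw [neg_mul_delta hv.2 _ _ (hgd v (x v) (hgtop v) (-1)).2]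
      simp only [hGfun, if_neg (by linarith [hv.2] : ¬ 0 < d v), if_pos hv.2]
    have hsplitD : (∑ v, d v * fderiv ℝ f x (Pi.single v 1))
        = (∑ v ∈ univ.filter (fun v => 0 < d v), d v * fderiv ℝ f x (Pi.single v 1))
          + ∑ v ∈ univ.filter (fun v => d v < 0), d v * fderiv ℝ f x (Pi.single v 1) :=
      split_sum d _ (fun v hv => by simp [hv])
    have hsplitG : (∑ v, Gfun v) = (∑ v ∈ univ.filter (fun v => 0 < d v), Gfun v)
        + ∑ v ∈ univ.filter (fun v => d v < 0), Gfun v := by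
      refine split_sum d Gfun (fun v hv => ?_)
      simp only [hGfun, hv]
      norm_num
    have hsplitTV : TVlim
        = ((∑ v ∈ univ.filter (fun v => 0 < d v), d v * (∑ e ∈ E.filter (fun e => e.1 = v ∨ e.2 = v),
              w e * Real.sign (x v - x (if e.1 = v then e.2 else e.1))))
          + ∑ v ∈ univ.filter (fun v => d v < 0), d v * (∑ e ∈ E.filter (fun e => e.1 = v ∨ e.2 = v),
              w e * Real.sign (x v - x (if e.1 = v then e.2 else e.1))))
          + ∑ e ∈ E.filter (fun e => x e.1 = x e.2), w e * |d e.1 - d e.2| := by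
      have h4 : TVlim = (∑ v, d v * (∑ e ∈ E.filter (fun e => e.1 = v ∨ e.2 = v),
            w e * Real.sign (x v - x (if e.1 = v then e.2 else e.1))))
          + ∑ e ∈ E.filter (fun e => x e.1 = x e.2), w e * |d e.1 - d e.2| := by
        rw [hTVlim]
        simp only [hTVD]
        exact TVlim_split E w x d
      rw [h4, split_sum d (fun v => d v * (∑ e ∈ E.filter (fun e => e.1 = v ∨ e.2 = v),
        w e * Real.sign (x v - x (if e.1 = v then e.2 else e.1)))) (fun v hv => by simp [hv])]
    unfold dirDerivVal
    rw [Finset.sum_congr rfl hP, Finset.sum_congr rfl hN,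
      Finset.sum_add_distrib, Finset.sum_add_distrib, Finset.sum_add_distrib,
      Finset.sum_add_distrib, ← coe_sum, ← coe_sum, ← coe_sum, ← coe_sum,
      hfd, hsplitD, hsplitG, hsplitTV, EReal.coe_add, EReal.coe_add, EReal.coe_add]
    abel
  rw [← hval]
  have h1 : Tendsto (fun t : ℝ => ((t⁻¹ * (f (x + t • d) - f x) : ℝ) : EReal)) (𝓝[>] (0:ℝ))
      (𝓝 ((fderiv ℝ f x d : ℝ) : EReal)) := tendsto_slope_part f hf x d
  have h2 : Tendsto (fun t : ℝ => ∑ v, ((t⁻¹ : ℝ) : EReal) * (g v (x v + t * d v) - ((s0 v : ℝ) : EReal)))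
      (𝓝[>] (0:ℝ)) (𝓝 (∑ v, Gfun v)) := by
    apply tendsto_ereal_sum
    · intro v _
      have hrw : ((s0 v : ℝ) : EReal) = g v (x v) := (hgeq v).symm
      rcases lt_trichotomy (d v) 0 with hdv | hdv | hdv
      · have hG : Gfun v = ((-(d v) : ℝ) : EReal) * gd v (x v) (-1) := by
          simp only [hGfun]
          rw [if_neg (by linarith), if_pos hdv]
        have hder := hasDirDeriv'_smul_pos (hgd v (x v) (hgtop v) (-1)).1
          (c := -(d v)) (by linarith)
        have harg : (-(d v)) * (-1) = d v := by ring
        rw [harg] at hder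
        rw [hG, hrw]
        exact hder
      · have hG : Gfun v = 0 := by
          simp only [hGfun]
          rw [if_neg (by linarith), if_neg (by linarith)]
        rw [hG]
        have : (fun t : ℝ => ((t⁻¹ : ℝ) : EReal) * (g v (x v + t * d v) - ((s0 v : ℝ) : EReal)))
            = fun _ : ℝ => (0 : EReal) := by
          funext t
          rw [hdv, mul_zero, add_zero, hgeq v, ← EReal.coe_sub, sub_self, EReal.coe_zero, mul_zero]
        rw [this]
        exact tendsto_const_nhds
      · have hG : Gfun v = ((d v : ℝ) : EReal) * gd v (x v) 1 := by
          simp only [hGfun]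
          rw [if_pos hdv]
        have hder := hasDirDeriv'_smul_pos (hgd v (x v) (hgtop v) 1).1 (c := d v) hdv
        rw [mul_one] at hder
        rw [hG, hrw]
        exact hder
    · intro v _
      exact hGbot v
  have h3 : Tendsto (fun t : ℝ => ((t⁻¹ * ((∑ e ∈ E, w e * |(x + t • d) e.1 - (x + t • d) e.2|)
      - ∑ e ∈ E, w e * |x e.1 - x e.2|) : ℝ) : EReal)) (𝓝[>] (0:ℝ)) (𝓝 ((TVlim : ℝ) : EReal)) := by
    rw [EReal.tendsto_coe]
    have hev : ∀ᶠ t in 𝓝[>] (0:ℝ), ∀ e ∈ E,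
        t⁻¹ * (|(x e.1 - x e.2) + t * (d e.1 - d e.2)| - |x e.1 - x e.2|) = TVD e :=
      (Finset.eventually_all E).2 fun e _ =>
        (abs_quot_eventually (x e.1 - x e.2) (d e.1 - d e.2)).mono fun t h => by
          rw [h, hTVD]
          simp only [sub_eq_zero]
    apply Tendsto.congr' _ tendsto_const_nhds
    filter_upwards [hev, self_mem_nhdsWithin] with t hpt ht
    have hterm : ∀ e ∈ E, w e * TVD e
        = t⁻¹ * (w e * (|(x + t • d) e.1 - (x + t • d) e.2| - |x e.1 - x e.2|)) := by
      intro e he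
      have harg : (x + t • d) e.1 - (x + t • d) e.2
          = (x e.1 - x e.2) + t * (d e.1 - d e.2) := by
        simp only [Pi.add_apply, Pi.smul_apply, smul_eq_mul]
        ring
      rw [harg, ← hpt e he]
      ring
    have hsub : (∑ e ∈ E, w e * |(x + t • d) e.1 - (x + t • d) e.2|)
        - ∑ e ∈ E, w e * |x e.1 - x e.2|
        = ∑ e ∈ E, w e * (|(x + t • d) e.1 - (x + t • d) e.2| - |x e.1 - x e.2|) := by
      rw [← Finset.sum_sub_distrib]
      exact Finset.sum_congr rfl fun e _ => (mul_sub _ _ _).symm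
    rw [hTVlim, Finset.sum_congr rfl hterm, ← Finset.mul_sum, hsub]
  have hadd1 := Tendsto.ereal_add h1 h2 (EReal.coe_ne_bot _) (sum_ne_bot _ _ fun v _ => hGbot v)
  have hadd2 := Tendsto.ereal_add hadd1 h3
    (add_ne_bot (EReal.coe_ne_bot _) (sum_ne_bot _ _ fun v _ => hGbot v)) (EReal.coe_ne_bot _)
  apply hadd2.congr'
  filter_upwards [self_mem_nhdsWithin] with t ht
  have hti : (0:ℝ) < t⁻¹ := inv_pos.2 ht
  show _ = ((t⁻¹ : ℝ) : EReal) * (objF E w f g (x + t • d) - objF E w f g x)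
  have hobj1 : objF E w f g (x + t • d) = ((f (x + t • d) : ℝ) : EReal)
      + (∑ v, g v (x v + t * d v))
      + ((∑ e ∈ E, w e * |(x + t • d) e.1 - (x + t • d) e.2| : ℝ) : EReal) := by
    unfold objF
    simp only [Pi.add_apply, Pi.smul_apply, smul_eq_mul]
  have hobj2 : objF E w f g x = ((f x : ℝ) : EReal) + (((∑ v, s0 v : ℝ)) : EReal)
      + ((∑ e ∈ E, w e * |x e.1 - x e.2| : ℝ) : EReal) := by
    unfold objF
    congr 1
    congr 1
    rw [coe_sum]
    exact Finset.sum_congr rfl fun v _ => hgeq v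
  rw [hobj1, hobj2, sub3 _ _ _ _ _ (sum_ne_bot _ _ fun v _ => hgbot v (x v + t * d v)),
    sub_sum univ _ s0 (fun v _ => hgbot v (x v + t * d v)),
    pos_mul_add hti, pos_mul_add hti, pos_mul_sum hti, ← EReal.coe_mul, ← EReal.coe_mul]
noncomputable def Dpos (E : Finset (V × V)) (w : V × V → ℝ) (x : V → ℝ)
    (Δ : V → EReal) (e : V → ℝ) : EReal :=
  (∑ v ∈ univ.filter (fun v => 0 < e v), ((e v : ℝ) : EReal) * Δ v)
    + ((∑ p ∈ E.filter (fun p => x p.1 = x p.2), w p * |e p.1 - e p.2| : ℝ) : EReal)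

lemma Dpos_ne_bot (E : Finset (V × V)) (w : V × V → ℝ) (x : V → ℝ)
    (Δ : V → EReal) (hΔ : ∀ v, Δ v ≠ ⊥) (e : V → ℝ) : Dpos E w x Δ e ≠ ⊥ := by
  apply add_ne_bot _ (EReal.coe_ne_bot _)
  apply sum_ne_bot
  intro v hv
  rw [Finset.mem_filter] at hv
  exact coe_mul_top_ne_bot hv.2 (hΔ v)

lemma deltaPlus_ne_bot (E : Finset (V × V)) (w : V × V → ℝ) (f : (V → ℝ) → ℝ)
    (gd : V → ℝ → ℝ → EReal) (x : V → ℝ) (v : V) (hb : gd v (x v) 1 ≠ ⊥) :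
    deltaPlus E w f gd x v ≠ ⊥ :=
  add_ne_bot (add_ne_bot (EReal.coe_ne_bot _) hb) (EReal.coe_ne_bot _)

lemma deltaMinus_ne_top (E : Finset (V × V)) (w : V × V → ℝ) (f : (V → ℝ) → ℝ)
    (gd : V → ℝ → ℝ → EReal) (x : V → ℝ) (v : V) (hb : gd v (x v) (-1) ≠ ⊥) :
    deltaMinus E w f gd x v ≠ ⊤ :=
  add_coe_ne_top (coe_sub_ne_top hb _) _

lemma dirDerivVal_ne_bot (E : Finset (V × V)) (w : V × V → ℝ) (f : (V → ℝ) → ℝ)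
    (gd : V → ℝ → ℝ → EReal) (x : V → ℝ)
    (hb1 : ∀ v, gd v (x v) 1 ≠ ⊥) (hbm : ∀ v, gd v (x v) (-1) ≠ ⊥) (d : V → ℝ) :
    dirDerivVal E w f gd x d ≠ ⊥ := by
  unfold dirDerivVal
  apply add_ne_bot _ (EReal.coe_ne_bot _)
  apply add_ne_bot
  · apply sum_ne_bot
    intro v hv
    rw [Finset.mem_filter] at hv
    exact coe_mul_top_ne_bot hv.2 (deltaPlus_ne_bot E w f gd x v (hb1 v))
  · apply sum_ne_bot
    intro v hv
    rw [Finset.mem_filter] at hv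
    exact neg_mul_ne_top_ne_bot hv.2 (deltaMinus_ne_top E w f gd x v (hbm v))

lemma pos_case (E : Finset (V × V)) (w : V × V → ℝ) (f : (V → ℝ) → ℝ)
    (gd : V → ℝ → ℝ → EReal) (x : V → ℝ) (d : V → ℝ) (hd : ∀ v, 0 ≤ d v) :
    dirDerivVal E w f gd x d = Dpos E w x (deltaPlus E w f gd x) d := by
  unfold dirDerivVal Dpos
  have hempty : univ.filter (fun v => d v < 0) = ∅ := by
    apply Finset.filter_false_of_mem
    intro v _
    exact not_lt.2 (hd v)
  rw [hempty, Finset.sum_empty, add_zero]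

lemma neg_case (E : Finset (V × V)) (w : V × V → ℝ) (f : (V → ℝ) → ℝ)
    (gd : V → ℝ → ℝ → EReal) (x : V → ℝ) (d : V → ℝ) (hd : ∀ v, d v ≤ 0) :
    dirDerivVal E w f gd x d
      = Dpos E w x (fun v => -(deltaMinus E w f gd x v)) (fun v => -(d v)) := by
  unfold dirDerivVal Dpos
  have hempty : univ.filter (fun v => 0 < d v) = ∅ := by
    apply Finset.filter_false_of_mem
    intro v _
    exact not_lt.2 (hd v)
  have hfilter : (univ.filter (fun v => 0 < -(d v))) = univ.filter (fun v => d v < 0) := by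
    ext v
    simp [neg_pos]
  rw [hempty, Finset.sum_empty, zero_add, hfilter]
  congr 1
  · apply Finset.sum_congr rfl
    intro v _
    rw [EReal.coe_neg, neg_mul, mul_neg, neg_neg]
  · norm_cast
    apply Finset.sum_congr rfl
    intro p _
    rw [show -(d p.1) - -(d p.2) = -(d p.1 - d p.2) by ring, abs_neg]

lemma dd_split (E : Finset (V × V)) (w : V × V → ℝ) (f : (V → ℝ) → ℝ)
    (gd : V → ℝ → ℝ → EReal) (x : V → ℝ) (d : V → ℝ) :
    dirDerivVal E w f gd x d
      = dirDerivVal E w f gd x (fun v => max (d v) 0)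
        + dirDerivVal E w f gd x (fun v => min (d v) 0) := by
  unfold dirDerivVal
  have hPmax : univ.filter (fun v => 0 < max (d v) 0) = univ.filter (fun v => 0 < d v) := by
    ext v; simp [lt_max_iff]
  have hNmax : univ.filter (fun v => max (d v) 0 < 0) = ∅ := by
    apply Finset.filter_false_of_mem
    intro v _
    simp [le_max_right (d v) 0]
  have hPmin : univ.filter (fun v => 0 < min (d v) 0) = ∅ := by
    apply Finset.filter_false_of_mem
    intro v _
    simp [min_le_right (d v) 0]
  have hNmin : univ.filter (fun v => min (d v) 0 < 0) = univ.filter (fun v => d v < 0) := by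
    ext v; simp [min_lt_iff]
  rw [hPmax, hNmax, hPmin, hNmin, Finset.sum_empty, Finset.sum_empty, add_zero, zero_add]
  have h1 : ∀ v ∈ univ.filter (fun v => 0 < d v),
      ((max (d v) 0 : ℝ) : EReal) * deltaPlus E w f gd x v
        = ((d v : ℝ) : EReal) * deltaPlus E w f gd x v := by
    intro v hv
    rw [Finset.mem_filter] at hv
    rw [max_eq_left hv.2.le]
  have h2 : ∀ v ∈ univ.filter (fun v => d v < 0),
      ((min (d v) 0 : ℝ) : EReal) * deltaMinus E w f gd x v
        = ((d v : ℝ) : EReal) * deltaMinus E w f gd x v := by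
    intro v hv
    rw [Finset.mem_filter] at hv
    rw [min_eq_left hv.2.le]
  rw [Finset.sum_congr rfl h1, Finset.sum_congr rfl h2]
  have h3 : (∑ p ∈ E.filter (fun p => x p.1 = x p.2), w p * |d p.1 - d p.2| : ℝ)
      = (∑ p ∈ E.filter (fun p => x p.1 = x p.2), w p * |max (d p.1) 0 - max (d p.2) 0|)
        + ∑ p ∈ E.filter (fun p => x p.1 = x p.2), w p * |min (d p.1) 0 - min (d p.2) 0| := by
    rw [← Finset.sum_add_distrib]
    apply Finset.sum_congr rfl
    intro p _
    rw [abs_split (d p.1) (d p.2)]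
    ring
  rw [h3, EReal.coe_add]
  abel
lemma Dpos_zero (E : Finset (V × V)) (w : V × V → ℝ) (x : V → ℝ) (Δ : V → EReal)
    (e : V → ℝ) (he : ∀ v, e v = 0) : Dpos E w x Δ e = 0 := by
  unfold Dpos
  have h1 : univ.filter (fun v => 0 < e v) = ∅ := by
    apply Finset.filter_false_of_mem
    intro v _
    rw [he v]
    exact lt_irrefl 0
  have h2 : ∀ p ∈ E.filter (fun p => x p.1 = x p.2), w p * |e p.1 - e p.2| = 0 := by
    intro p _
    rw [he p.1, he p.2, sub_self, abs_zero, mul_zero]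
  rw [h1, Finset.sum_empty, Finset.sum_congr rfl h2, Finset.sum_const_zero, EReal.coe_zero,
    add_zero]

lemma Dpos_descent (E : Finset (V × V)) (w : V × V → ℝ) (x : V → ℝ) (Δ : V → EReal)
    (hΔ : ∀ v, Δ v ≠ ⊥) :
    ∀ (n : ℕ) (e : V → ℝ), (univ.filter (fun v => 0 < e v)).card ≤ n → (∀ v, 0 ≤ e v) →
      Dpos E w x Δ e < 0 →
      ∃ U : Finset V, Dpos E w x Δ (fun v => if v ∈ U then 1 else 0) < 0 := by
  classical
  intro n
  induction n with
  | zero =>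
    intro e hcard he hneg
    exfalso
    have hfil : univ.filter (fun v => 0 < e v) = ∅ := Finset.card_eq_zero.1 (le_antisymm hcard (Nat.zero_le _))
    have hzero : ∀ v, e v = 0 := by
      intro v
      rcases (he v).lt_or_eq with h | h
      · have : v ∈ univ.filter (fun v => 0 < e v) := by
          rw [Finset.mem_filter]
          exact ⟨Finset.mem_univ v, h⟩
        rw [hfil] at this
        exact absurd this (Finset.notMem_empty v)
      · exact h.symm
    rw [Dpos_zero E w x Δ e hzero] at hneg
    exact lt_irrefl 0 hneg
  | succ n ih =>
    intro e hcard he hneg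
    by_cases hsupp : univ.filter (fun v => 0 < e v) = ∅
    · exfalso
      have hzero : ∀ v, e v = 0 := by
        intro v
        rcases (he v).lt_or_eq with h | h
        · have : v ∈ univ.filter (fun v => 0 < e v) := by
            rw [Finset.mem_filter]
            exact ⟨Finset.mem_univ v, h⟩
          rw [hsupp] at this
          exact absurd this (Finset.notMem_empty v)
        · exact h.symm
      rw [Dpos_zero E w x Δ e hzero] at hneg
      exact lt_irrefl 0 hneg
    · set U := univ.filter (fun v => 0 < e v) with hU
      obtain ⟨v0, hv0U, hv0min⟩ :=
        Finset.exists_min_image U e (Finset.nonempty_of_ne_empty hsupp)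
      set m := e v0 with hm
      have hmpos : 0 < m := (Finset.mem_filter.1 hv0U).2
      set e' : V → ℝ := fun v => if v ∈ U then e v - m else 0 with he'
      have he'nonneg : ∀ v, 0 ≤ e' v := by
        intro v
        simp only [he']
        split_ifs with h
        · exact sub_nonneg.2 (hv0min v h)
        · exact le_refl 0
      have heU : ∀ v, v ∈ U ↔ 0 < e v := by
        intro v
        rw [hU, Finset.mem_filter]
        simp
      have hezero : ∀ v, v ∉ U → e v = 0 := by
        intro v hv
        rcases (he v).lt_or_eq with h | h
        · exact absurd ((heU v).2 h) hv
        · exact h.symm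
      -- the indicator function
      set ind : V → ℝ := fun v => if v ∈ U then 1 else 0 with hind
      -- support of e'
      have hsub : univ.filter (fun v => 0 < e' v) ⊆ U.erase v0 := by
        intro v hv
        rw [Finset.mem_filter] at hv
        rw [Finset.mem_erase]
        have hvU : v ∈ U := by
          by_contra hvn
          have : e' v = 0 := by simp only [he', if_neg hvn]
          rw [this] at hv
          exact lt_irrefl 0 hv.2
        refine ⟨?_, hvU⟩
        intro hveq
        have : e' v0 = 0 := by simp only [he', if_pos hv0U, hm, sub_self]
        rw [hveq] at hv
        rw [this] at hv
        exact lt_irrefl 0 hv.2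
      have hcard' : (univ.filter (fun v => 0 < e' v)).card ≤ n := by
        calc (univ.filter (fun v => 0 < e' v)).card ≤ (U.erase v0).card :=
              Finset.card_le_card hsub
          _ = U.card - 1 := Finset.card_erase_of_mem hv0U
          _ ≤ n := by omega
      -- decomposition : Dpos e = m * Dpos ind + Dpos e'
      have hdecomp : Dpos E w x Δ e = ((m : ℝ) : EReal) * Dpos E w x Δ ind + Dpos E w x Δ e' := by
        unfold Dpos
        have hfInd : univ.filter (fun v => 0 < ind v) = U := by
          ext v
          rw [Finset.mem_filter]
          simp only [Finset.mem_univ, true_and, hind]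
          by_cases h : v ∈ U
          · simp [h]
          · simp [h]
        rw [hfInd]
        have hindsum : ∑ v ∈ U, ((ind v : ℝ) : EReal) * Δ v = ∑ v ∈ U, Δ v := by
          apply Finset.sum_congr rfl
          intro v hv
          simp only [hind, if_pos hv, EReal.coe_one, one_mul]
        rw [hindsum, pos_mul_add hmpos, pos_mul_sum hmpos, ← EReal.coe_mul]
        rw [← hU]
        have hesum : ∑ v ∈ U, ((e v : ℝ) : EReal) * Δ v
            = (∑ v ∈ U, ((m : ℝ) : EReal) * Δ v) + ∑ v ∈ U, ((e' v : ℝ) : EReal) * Δ v := by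
          rw [← Finset.sum_add_distrib]
          apply Finset.sum_congr rfl
          intro v hv
          have hvm : e v = m + e' v := by
            simp only [he', if_pos hv]
            ring
          rw [hvm, nonneg_distrib hmpos.le (he'nonneg v)]
        have he'sum : ∑ v ∈ U, ((e' v : ℝ) : EReal) * Δ v
            = ∑ v ∈ univ.filter (fun v => 0 < e' v), ((e' v : ℝ) : EReal) * Δ v := by
          refine (Finset.sum_subset (fun v hv => Finset.mem_of_mem_erase (hsub hv)) ?_).symm
          intro v hvU hvn
          have h0 : e' v = 0 := by
            refine le_antisymm ?_ (he'nonneg v)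
            by_contra hlt
            push_neg at hlt
            exact hvn (Finset.mem_filter.2 ⟨Finset.mem_univ v, hlt⟩)
          rw [h0, EReal.coe_zero, zero_mul]
        have habs : ∀ a b : V, |e a - e b| = m * |ind a - ind b| + |e' a - e' b| := by
          intro a b
          by_cases ha : a ∈ U <;> by_cases hb : b ∈ U
          · simp only [hind, he', if_pos ha, if_pos hb]
            rw [sub_self, abs_zero, mul_zero, zero_add]
            congr 1
            ring
          · have hb0 := hezero b hb
            simp only [hind, he', if_pos ha, if_neg hb]
            rw [hb0, sub_zero, sub_zero, sub_zero, abs_of_pos ((heU a).1 ha), abs_one,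
              abs_of_nonneg (sub_nonneg.2 (hv0min a ha))]
            ring
          · have ha0 := hezero a ha
            simp only [hind, he', if_neg ha, if_pos hb]
            rw [ha0, zero_sub, zero_sub, zero_sub, abs_neg, abs_neg, abs_neg,
              abs_of_pos ((heU b).1 hb), abs_one, abs_of_nonneg (sub_nonneg.2 (hv0min b hb))]
            ring
          · rw [hezero a ha, hezero b hb]
            simp only [hind, he', if_neg ha, if_neg hb]
            simp
        have hTV : (∑ p ∈ E.filter (fun p => x p.1 = x p.2), w p * |e p.1 - e p.2| : ℝ)
            = m * (∑ p ∈ E.filter (fun p => x p.1 = x p.2), w p * |ind p.1 - ind p.2|)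
              + ∑ p ∈ E.filter (fun p => x p.1 = x p.2), w p * |e' p.1 - e' p.2| := by
          rw [Finset.mul_sum, ← Finset.sum_add_distrib]
          apply Finset.sum_congr rfl
          intro p _
          rw [habs p.1 p.2]
          ring
        rw [hesum, he'sum, hTV, EReal.coe_add]
        abel
      have hmne : ((m : ℝ) : EReal) * Dpos E w x Δ ind ≠ ⊥ :=
        coe_mul_top_ne_bot hmpos (Dpos_ne_bot E w x Δ hΔ ind)
      have he'ne : Dpos E w x Δ e' ≠ ⊥ := Dpos_ne_bot E w x Δ hΔ e'
      rw [hdecomp] at hneg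
      by_cases hcase : Dpos E w x Δ e' < 0
      · exact ih e' hcard' he'nonneg hcase
      · refine ⟨U, ?_⟩
        have hA : ((m : ℝ) : EReal) * Dpos E w x Δ ind < 0 := by
          by_contra hA
          push_neg at hA hcase
          exact absurd (add_nonneg hA hcase) (not_le.2 hneg)
        exact (pos_mul_neg_iff hmpos).1 hA
end SH

theorem stmt_14 (E : Finset (V × V)) (w : V × V → ℝ) (hw : ∀ e ∈ E, 0 ≤ w e)
    (f : (V → ℝ) → ℝ) (hf : Differentiable ℝ f)
    (g : V → ℝ → EReal) (hgbot : ∀ v y, g v y ≠ ⊥)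
    (gd : V → ℝ → ℝ → EReal)
    (hgd : ∀ v y, g v y ≠ ⊤ → ∀ dir : ℝ,
      HasDirDeriv (g v) y dir (gd v y dir) ∧ gd v y dir ≠ ⊥)
    (x : V → ℝ) (hx : objF E w f g x ≠ ⊤)
    (hdesc : ∃ d : V → ℝ, ∃ L : EReal,
      HasDirDeriv (objF E w f g) x d L ∧ L < 0) :
    ∃ U : Set V, ∃ s : ℝ, (s = -1 ∨ s = 1) ∧
      ∃ L : EReal,
        HasDirDeriv (objF E w f g) x (U.indicator fun _ => s) L ∧
        L < 0 := by
  classical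
  obtain ⟨d, L0, hL0, hL0neg⟩ := hdesc
  have hgtop : ∀ v, g v (x v) ≠ ⊤ := SH.g_ne_top E w f g hgbot x hx
  have hb1 : ∀ v, gd v (x v) 1 ≠ ⊥ := fun v => (hgd v (x v) (hgtop v) 1).2
  have hbm : ∀ v, gd v (x v) (-1) ≠ ⊥ := fun v => (hgd v (x v) (hgtop v) (-1)).2
  have hmain := SH.main_deriv E w f hf g hgbot gd hgd x hx
  have hdd : dirDerivVal E w f gd x d < 0 := by
    have heq := SH.hasDirDeriv'_unique hL0 (hmain d)
    rwa [heq] at hL0neg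
  rw [SH.dd_split E w f gd x d] at hdd
  have hcases : dirDerivVal E w f gd x (fun v => max (d v) 0) < 0
      ∨ dirDerivVal E w f gd x (fun v => min (d v) 0) < 0 := by
    by_contra hc
    push_neg at hc
    exact absurd (add_nonneg hc.1 hc.2) (not_le.2 hdd)
  rcases hcases with hc | hc
  · have hpos : ∀ v, 0 ≤ max (d v) 0 := fun v => le_max_right _ _
    rw [SH.pos_case E w f gd x _ hpos] at hc
    obtain ⟨U, hU⟩ := SH.Dpos_descent E w x (deltaPlus E w f gd x)
      (fun v => SH.deltaPlus_ne_bot E w f gd x v (hb1 v)) _ _ (le_refl _) hpos hc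
    refine ⟨↑U, 1, Or.inr rfl, _, hmain _, ?_⟩
    have hindeq : (Set.indicator (↑U : Set V) fun _ => (1:ℝ))
        = fun v => if v ∈ U then 1 else 0 := by
      funext v
      by_cases h : v ∈ U <;> simp [h]
    rw [hindeq, SH.pos_case E w f gd x _ (fun v => by split_ifs <;> norm_num)]
    exact hU
  · have hneg : ∀ v, min (d v) 0 ≤ 0 := fun v => min_le_right _ _
    rw [SH.neg_case E w f gd x _ hneg] at hc
    have hΔmne : ∀ v, (fun v => -(deltaMinus E w f gd x v)) v ≠ ⊥ := by
      intro v
      dsimp only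
      intro h
      apply SH.deltaMinus_ne_top E w f gd x v (hbm v)
      have := congrArg Neg.neg h
      rwa [neg_neg] at this
    have hposm : ∀ v, 0 ≤ -(min (d v) 0) := fun v => neg_nonneg.2 (hneg v)
    obtain ⟨U, hU⟩ := SH.Dpos_descent E w x _ hΔmne _ _ (le_refl _) hposm hc
    refine ⟨↑U, -1, Or.inl rfl, _, hmain _, ?_⟩
    have hindeq : (Set.indicator (↑U : Set V) fun _ => (-1:ℝ))
        = fun v => -(if v ∈ U then (1:ℝ) else 0) := by
      funext v
      by_cases h : v ∈ U <;> simp [h]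
    rw [hindeq, SH.neg_case E w f gd x _ (fun v => by split_ifs <;> norm_num)]
    simp only [neg_neg]
    exact hU
end
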